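/- arXiv:0706.3226 — 8 statements merged into one kernel-verified Lean document; each statement's English description precedes it below -/
import Mathlib

section
/- The number of facets of the n-th multiplihedron equals n(n-1)/2 + 2^(n-1) - 1, i.e. the number of lower trees plus the number of upper trees with n leaves. -/
/-- The number of facets of the n-th multiplihedron: the number of lower trees
(choices of `s` consecutive leaves, `2 ≤ s ≤ n`, with `n + 1 - s` positions each)
plus the number of upper trees (proper subsets of the `n - 1` gaps between leaves)
equals `n(n-1)/2 + 2^(n-1) - 1`. -/
theorem multiplihedron_facet_count (n : ℕ) (hn : 2 ≤ n) :
    (∑ s ∈ Finset.Icc 2 n, (n + 1 - s)) +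
      ((Finset.range (n - 1)).powerset.filter
        (fun S => S ≠ Finset.range (n - 1))).card
    = n * (n - 1) / 2 + (2 ^ (n - 1) - 1) := by
  have h1 : (∑ s ∈ Finset.Icc 2 n, (n + 1 - s)) = n * (n - 1) / 2 := by
    rw [show Finset.Icc 2 n = Finset.Ico 2 (n + 1) by rfl, Finset.sum_Ico_eq_sum_range]
    have he : ∀ i ∈ Finset.range (n + 1 - 2), n + 1 - (2 + i) = (n + 1 - 2) - 1 - i + 1 := by
      intro i hi
      simp only [Finset.mem_range] at hi
      omega
    rw [Finset.sum_congr rfl he, Finset.sum_range_reflect (fun j => j + 1)]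
    have h3 : ∑ j ∈ Finset.range (n + 1 - 2), (j + 1) = ∑ j ∈ Finset.range (n - 1 + 1), j := by
      rw [Finset.sum_range_succ_comm, Finset.sum_add_distrib, Finset.sum_const,
        Finset.card_range, smul_eq_mul, mul_one,
        show n + 1 - 2 = n - 1 from rfl]
      omega
    rw [h3, Finset.sum_range_id]
    have h4 : n - 1 + 1 = n := by omega
    rw [h4]
  have h2 : ((Finset.range (n - 1)).powerset.filter
      (fun S => S ≠ Finset.range (n - 1))).card = 2 ^ (n - 1) - 1 := by
    have := Finset.card_filter_add_card_filter_not
      (s := (Finset.range (n - 1)).powerset) (p := fun S => S = Finset.range (n - 1))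
    rw [Finset.filter_eq'] at this
    simp [Finset.mem_powerset] at this
    simp only [ne_eq]
    omega
  rw [h1, h2]
end

section
/- The number of painted binary trees with n leaves satisfies the recursion a(n) = C(n-1) + Σ_{i=1}^{n-1} a(i)·a(n-i) for n ≥ 1, with a(0) = 0. -/
/-- Unpainted planar binary trees. -/
inductive UTree : Type
  | leaf : UTree
  | node : UTree → UTree → UTree

/-- Number of leaves of an unpainted binary tree. -/
def UTree.leaves : UTree → ℕ
  | .leaf => 1
  | .node l r => l.leaves + r.leaves

/-- Painted binary trees: either a painted root edge ending at a bivalent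
(type 3) node with an unpainted binary tree above it, or a painted (type 2)
trivalent node joining two painted binary trees. -/
inductive PTree : Type
  | stump : UTree → PTree
  | node : PTree → PTree → PTree

/-- Number of leaves of a painted binary tree. -/
def PTree.leaves : PTree → ℕ
  | .stump u => u.leaves
  | .node l r => l.leaves + r.leaves

/- Auxiliary material -/

def UTree.toTree : UTree → Tree Unit
  | .leaf => Tree.nil
  | .node l r => Tree.node () l.toTree r.toTree

def UTree.ofTree : Tree Unit → UTree
  | BinaryTree.nil => .leaf
  | BinaryTree.node _ l r => .node (UTree.ofTree l) (UTree.ofTree r)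

def utreeEquiv : UTree ≃ Tree Unit where
  toFun := UTree.toTree
  invFun := UTree.ofTree
  left_inv := by
    intro u
    induction u with
    | leaf => rfl
    | node l r hl hr => simp [UTree.toTree, UTree.ofTree, hl, hr]
  right_inv := by
    intro t
    induction t with
    | nil => rfl
    | node _ l r hl hr => simp [UTree.toTree, UTree.ofTree, hl, hr]

lemma UTree.leaves_toTree (u : UTree) : u.toTree.numLeaves = u.leaves := by
  induction u with
  | leaf => rfl
  | node l r hl hr => simp [UTree.toTree, UTree.leaves, Tree.numLeaves, hl, hr]

lemma UTree.one_le_leaves (u : UTree) : 1 ≤ u.leaves := by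
  induction u with
  | leaf => simp [UTree.leaves]
  | node l r hl hr => simp [UTree.leaves]; omega

lemma PTree.one_le_leaves (t : PTree) : 1 ≤ t.leaves := by
  induction t with
  | stump u => exact u.one_le_leaves
  | node l r hl hr => simp [PTree.leaves]; omega

instance (m : ℕ) : Fintype {x : Tree Unit // x.numNodes = m} :=
  Fintype.subtype (Tree.treesOfNumNodesEq m) fun _ => BinaryTree.mem_treesOfNumNodesEq

def utreeSubEquiv (n : ℕ) (hn : 1 ≤ n) :
    {u : UTree // u.leaves = n} ≃ {x : Tree Unit // x.numNodes = n - 1} :=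
  utreeEquiv.subtypeEquiv (by
    intro u
    show u.leaves = n ↔ u.toTree.numNodes = n - 1
    rw [← UTree.leaves_toTree, Tree.numLeaves, Tree.numNodes, BinaryTree.numLeaves_eq_numNodes_succ]
    omega)

lemma utree_card (n : ℕ) (hn : 1 ≤ n) :
    Nat.card {u : UTree // u.leaves = n} = catalan (n - 1) := by
  rw [Nat.card_congr (utreeSubEquiv n hn), Nat.card_eq_fintype_card,
    Fintype.card_of_subtype (Tree.treesOfNumNodesEq (n - 1))
      (fun _ => BinaryTree.mem_treesOfNumNodesEq),
    BinaryTree.treesOfNumNodesEq_card_eq_catalan]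

instance utree_finite (n : ℕ) : Finite {u : UTree // u.leaves = n} := by
  rcases Nat.eq_zero_or_pos n with h | h
  · subst h
    haveI : IsEmpty {u : UTree // u.leaves = 0} :=
      ⟨fun u => by have := u.1.one_le_leaves; omega⟩
    exact Finite.of_subsingleton
  · exact Finite.of_equiv _ (utreeSubEquiv n h).symm

def pdecompose (n : ℕ) :
    {t : PTree // t.leaves = n} ≃
      {u : UTree // u.leaves = n} ⊕ {p : PTree × PTree // p.1.leaves + p.2.leaves = n} where
  toFun t := match t with
    | ⟨.stump u, h⟩ => .inl ⟨u, h⟩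
    | ⟨.node l r, h⟩ => .inr ⟨(l, r), h⟩
  invFun x := match x with
    | .inl ⟨u, h⟩ => ⟨.stump u, h⟩
    | .inr ⟨(l, r), h⟩ => ⟨.node l r, h⟩
  left_inv := by rintro ⟨(u | ⟨l, r⟩), h⟩ <;> rfl
  right_inv := by rintro (⟨u, h⟩ | ⟨⟨l, r⟩, h⟩) <;> rfl

def pairEquiv (n : ℕ) (hn : 1 ≤ n) :
    {p : PTree × PTree // p.1.leaves + p.2.leaves = n} ≃
      Σ i : (Finset.Icc 1 (n - 1)), {l : PTree // l.leaves = i.1} × {r : PTree // r.leaves = n - i.1} where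
  toFun p :=
    ⟨⟨p.1.1.leaves, by
        have h1 := p.1.1.one_le_leaves
        have h2 := p.1.2.one_le_leaves
        have := p.2
        simp only [Finset.mem_Icc]
        omega⟩,
      ⟨p.1.1, rfl⟩, ⟨p.1.2, by
        have h1 := p.1.1.one_le_leaves
        have := p.2
        show p.1.2.leaves = n - p.1.1.leaves
        omega⟩⟩
  invFun x :=
    ⟨(x.2.1.1, x.2.2.1), by
      have hi := x.1.2
      simp only [Finset.mem_Icc] at hi
      have h1 : x.2.1.1.leaves = x.1.1 := x.2.1.2
      have h2 : x.2.2.1.leaves = n - x.1.1 := x.2.2.2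
      show x.2.1.1.leaves + x.2.2.1.leaves = n
      omega⟩
  left_inv := by rintro ⟨⟨l, r⟩, h⟩; rfl
  right_inv := by
    rintro ⟨⟨i, hi⟩, ⟨l, hl⟩, ⟨r, hr⟩⟩
    have hl' : l.leaves = i := hl
    subst hl'
    rfl

lemma ptree_finite : ∀ n, Finite {t : PTree // t.leaves = n} := by
  intro n
  induction n using Nat.strong_induction_on with
  | _ n ih =>
    rcases Nat.eq_zero_or_pos n with h | h
    · subst h
      haveI : IsEmpty {t : PTree // t.leaves = 0} :=
        ⟨fun t => by have := t.1.one_le_leaves; omega⟩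
      exact Finite.of_subsingleton
    · have : ∀ i : (Finset.Icc 1 (n - 1) : Finset ℕ),
          Finite ({l : PTree // l.leaves = i.1} × {r : PTree // r.leaves = n - i.1}) := by
        intro i
        have hi := i.2
        simp only [Finset.mem_Icc] at hi
        have f1 : Finite {l : PTree // l.leaves = i.1} := ih i.1 (by omega)
        have f2 : Finite {r : PTree // r.leaves = n - i.1} := ih (n - i.1) (by omega)
        exact Finite.instProd
      have : Finite ((Σ i : (Finset.Icc 1 (n - 1)),
          {l : PTree // l.leaves = i.1} × {r : PTree // r.leaves = n - i.1})) :=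
        Finite.instSigma
      have h2 : Finite {p : PTree × PTree // p.1.leaves + p.2.leaves = n} :=
        Finite.of_equiv _ (pairEquiv n h).symm
      exact Finite.of_equiv _ (pdecompose n).symm

lemma nat_card_sigma {ι : Type*} [Fintype ι] (f : ι → Type*) [∀ i, Finite (f i)] :
    Nat.card (Σ i, f i) = ∑ i, Nat.card (f i) := by
  have : ∀ i, Fintype (f i) := fun i => Fintype.ofFinite _
  simp only [Nat.card_eq_fintype_card]
  exact Fintype.card_sigma

/-- The number of painted binary trees with `n` leaves satisfies
`a n = C(n-1) + Σ_{i=1}^{n-1} a i * a (n-i)` for `n ≥ 1`, with `a 0 = 0`,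
where `C` is the Catalan number function. -/
theorem painted_tree_count_recursion (n : ℕ) (hn : 1 ≤ n) :
    Nat.card {t : PTree // t.leaves = 0} = 0 ∧
    Nat.card {t : PTree // t.leaves = n} =
      catalan (n - 1) + ∑ i ∈ Finset.Icc 1 (n - 1),
        Nat.card {t : PTree // t.leaves = i} *
          Nat.card {t : PTree // t.leaves = n - i} := by
  constructor
  · have : IsEmpty {t : PTree // t.leaves = 0} :=
      ⟨fun t => by have := t.1.one_le_leaves; omega⟩
    simp
  · have hfin : ∀ m, Finite {t : PTree // t.leaves = m} := ptree_finite
    have hfu : Finite {u : UTree // u.leaves = n} := utree_finite n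
    have hfinP : ∀ i : (Finset.Icc 1 (n - 1) : Finset ℕ),
        Finite ({l : PTree // l.leaves = i.1} × {r : PTree // r.leaves = n - i.1}) :=
      fun i => @Finite.instProd _ _ (hfin _) (hfin _)
    have hpairs : Finite {p : PTree × PTree // p.1.leaves + p.2.leaves = n} :=
      Finite.of_equiv _ (pairEquiv n hn).symm
    rw [Nat.card_congr (pdecompose n), Nat.card_sum, utree_card n hn,
      Nat.card_congr (pairEquiv n hn), nat_card_sigma]
    congr 1
    rw [← Finset.sum_coe_sort (Finset.Icc 1 (n - 1))]
    exact Finset.sum_congr rfl fun i _ => by rw [Nat.card_prod]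
end

section
/- The formal power series A(x) = (1 − sqrt(2·sqrt(1−4x) − 1))/2 satisfies the functional equation A(x) = x·c(x) + A(x)², where c(x) = (1 − sqrt(1−4x))/(2x) is the Catalan generating function. -/
open PowerSeries

/-- The formal power series `A = (1 - sqrt(2·sqrt(1-4x) - 1))/2` satisfies
`A = x·c + A²`, where `c = (1 - sqrt(1-4x))/(2x)` is the Catalan generating
function.  Here `S` plays the role of `sqrt(1-4x)` and `T` of
`sqrt(2·sqrt(1-4x) - 1)`. -/
theorem multiplihedron_gf_equation (A c S T : PowerSeries ℚ)
    (hS0 : constantCoeff S = 1) (hS : S ^ 2 = 1 - 4 * X)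
    (hT0 : constantCoeff T = 1) (hT : T ^ 2 = 2 * S - 1)
    (hA : 2 * A = 1 - T) (hc : 2 * (X * c) = 1 - S) :
    A = X * c + A ^ 2 := by
  have h4 : (4 : PowerSeries ℚ) * A = 4 * (X * c + A ^ 2) := by
    linear_combination 2 * hA - 2 * hc - (2 * A + 1 - T) * hA - hT
  refine mul_left_cancel₀ (fun h => ?_) h4
  have := congrArg (constantCoeff) h
  rw [map_ofNat] at this; norm_num at this
end

section
/- If A(x) is the formal power series satisfying A = x·c(x) + A² with A(0)=0, and c(x) is the Catalan generating function satisfying c = 1 + x·c², then A(x) = x·c(x)·c(x·c(x)), i.e. A is the Catalan transform of the series x·c(x). -/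
open PowerSeries

/-- If `A` is the formal power series with `A(0) = 0` satisfying
`A = x·c + A²`, where `c` is the Catalan generating function
(`c = 1 + x·c²`, `c(0) = 1`), and `d` is the composite `c(x·c(x))`,
characterized by `d(0) = 1` and `d = 1 + (x·c)·d²`, then
`A = x·c(x)·c(x·c(x))`, i.e. `A` is the Catalan transform of `x·c(x)`. -/
theorem multiplihedron_gf_catalan_transform (A c d : PowerSeries ℚ)
    (hA0 : constantCoeff A = 0) (hA : A = X * c + A ^ 2)
    (hc0 : constantCoeff c = 1) (hc : c = 1 + X * c ^ 2)
    (hd0 : constantCoeff d = 1) (hd : d = 1 + (X * c) * d ^ 2) :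
    A = X * c * d := by
  have hB : X * c * d = X * c + (X * c * d) ^ 2 := by
    nth_rewrite 1 [hd]; ring
  have h : (A - X * c * d) * (1 - (A + X * c * d)) = 0 := by
    linear_combination hA - hB
  rcases mul_eq_zero.mp h with h' | h'
  · exact sub_eq_zero.mp h'
  · exfalso
    have h2 := congrArg (constantCoeff) h'
    simp [hA0, hc0, hd0] at h2
end

section
/- The number of vertices of the n-th multiplihedron is given by the closed formula a(n) = (1/n)·Σ_{k=1}^{n} binomial(2n−k−1, n−1)·binomial(2k−2, k−1), for n ≥ 1; in particular this formula satisfies the recursion a(n) = C(n−1) + Σ_{i=1}^{n−1} a(i)·a(n−i). -/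
open PowerSeries Finset

namespace MultAux

noncomputable def Cgf : PowerSeries ℕ := PowerSeries.mk catalan

noncomputable def f : PowerSeries ℕ := PowerSeries.X * Cgf

noncomputable def u (n k : ℕ) : ℕ := PowerSeries.coeff n (f ^ k)

lemma hC : Cgf = 1 + PowerSeries.X * (Cgf * Cgf) := by
  ext n
  cases n with
  | zero => simp [Cgf]
  | succ m =>
    rw [map_add, coeff_one, if_neg (Nat.succ_ne_zero m), coeff_succ_X_mul, coeff_mul, zero_add]
    simp only [Cgf, coeff_mk]
    rw [catalan_succ']

lemma hf : f = PowerSeries.X + f * f := by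
  conv_lhs => rw [f, hC]
  rw [f]
  ring

lemma u_zero (n : ℕ) : u n 0 = if n = 0 then 1 else 0 := by
  simp [u, coeff_one]

lemma u_eq_zero {n k : ℕ} (h : n < k) : u n k = 0 := by
  rw [u, show f ^ k = PowerSeries.X ^ k * Cgf ^ k by rw [f, mul_pow], coeff_mul]
  apply Finset.sum_eq_zero
  intro p hp
  rw [Finset.HasAntidiagonal.mem_antidiagonal] at hp
  rw [coeff_X_pow, if_neg, zero_mul]
  omega

lemma u_diag (n : ℕ) : u n n = 1 := by
  have h := PowerSeries.coeff_X_pow_mul (Cgf ^ n) n 0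
  rw [zero_add] at h
  rw [u, show f ^ n = PowerSeries.X ^ n * Cgf ^ n by rw [f, mul_pow], h,
    coeff_zero_eq_constantCoeff, map_pow]
  simp [Cgf]

lemma u_one (n : ℕ) : u (n + 1) 1 = catalan n := by
  rw [u, pow_one, f, coeff_succ_X_mul]
  simp [Cgf]

lemma u_rec (n k : ℕ) : u (n + 1) (k + 1) = u n k + u (n + 1) (k + 2) := by
  have h : f ^ (k + 1) = PowerSeries.X * f ^ k + f ^ (k + 2) := by
    calc f ^ (k + 1) = (PowerSeries.X + f * f) * f ^ k := by rw [← hf, pow_succ, mul_comm]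
    _ = PowerSeries.X * f ^ k + f ^ (k + 2) := by ring
  rw [u, h, map_add, coeff_succ_X_mul]
  rfl

lemma u_conv (n k l : ℕ) :
    u n (k + l) = ∑ i ∈ range (n + 1), u i k * u (n - i) l := by
  rw [u, pow_add, coeff_mul, Finset.Nat.sum_antidiagonal_eq_sum_range_succ_mk]
  rfl

end MultAux

namespace MultAux

lemma u_closed_aux (m : ℕ) : ∀ n k : ℕ, 1 ≤ k → k < n → 2 * n - k ≤ m →
    u n k + Nat.choose (2 * n - k - 1) (n - k - 1) = Nat.choose (2 * n - k - 1) (n - k) := by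
  induction m with
  | zero => intro n k h1 h2 h3; omega
  | succ m ih =>
    intro n k h1 h2 h3
    obtain ⟨n', rfl⟩ : ∃ n', n = n' + 1 := ⟨n - 1, by omega⟩
    obtain ⟨k', rfl⟩ : ∃ k', k = k' + 1 := ⟨k - 1, by omega⟩
    have hk'n' : k' < n' := by omega
    set s := n' - k' with hs
    set M := 2 * n' - k' - 1 with hM
    have hs1 : 1 ≤ s := by omega
    have hrec := u_rec n' k'
    have goalidx1 : 2 * (n' + 1) - (k' + 1) - 1 = M + 1 := by omega
    have goalidx2 : (n' + 1) - (k' + 1) - 1 = s - 1 := by omega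
    have goalidx3 : (n' + 1) - (k' + 1) = s := by omega
    rw [goalidx1, goalidx2, goalidx3]
    have H1 : u n' k' + Nat.choose M (s - 1) = Nat.choose M s := by
      rcases Nat.eq_zero_or_pos k' with hk0 | hk0
      · subst hk0
        have hA : u n' 0 = 0 := by rw [u_zero, if_neg (by omega)]
        have hsym : Nat.choose M (s - 1) = Nat.choose M s := by
          have h := Nat.choose_symm (show s ≤ M by omega) (n := M)
          rw [show M - s = s - 1 by omega] at h
          omega
        omega
      · have := ih n' k' hk0 hk'n' (by omega)
        rw [show 2 * n' - k' - 1 = M by omega, show n' - k' - 1 = s - 1 by omega,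
          show n' - k' = s by omega] at this
        exact this
    have P1 : Nat.choose (M + 1) s = Nat.choose M (s - 1) + Nat.choose M s := by
      have h := Nat.choose_succ_succ M (s - 1)
      simp only [Nat.succ_eq_add_one] at h
      rw [show s - 1 + 1 = s by omega] at h
      exact h
    rcases Nat.lt_or_ge 1 s with hs2 | hs2
    · have H2 := ih (n' + 1) (k' + 2) (by omega) (by omega) (by omega)
      rw [show 2 * (n' + 1) - (k' + 2) - 1 = M by omega,
        show (n' + 1) - (k' + 2) - 1 = s - 2 by omega,
        show (n' + 1) - (k' + 2) = s - 1 by omega] at H2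
      have P2 : Nat.choose (M + 1) (s - 1) = Nat.choose M (s - 2) + Nat.choose M (s - 1) := by
        have h := Nat.choose_succ_succ M (s - 2)
        simp only [Nat.succ_eq_add_one] at h
        rw [show s - 2 + 1 = s - 1 by omega] at h
        exact h
      omega
    · have hseq : s = 1 := by omega
      have hB : u (n' + 1) (k' + 2) = 1 := by
        rw [show k' + 2 = n' + 1 by omega]; exact u_diag _
      have c1 : Nat.choose (M + 1) 0 = 1 := Nat.choose_zero_right _
      have c2 : Nat.choose (M + 1) 1 = M + 1 := Nat.choose_one_right _
      have c3 : Nat.choose M 0 = 1 := Nat.choose_zero_right _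
      have c4 : Nat.choose M 1 = M := Nat.choose_one_right _
      rw [hseq] at H1 ⊢
      simp only [Nat.sub_self] at H1 ⊢
      omega

lemma u_closed {n k : ℕ} (h1 : 1 ≤ k) (h2 : k < n) :
    u n k + Nat.choose (2 * n - k - 1) (n - k - 1) = Nat.choose (2 * n - k - 1) (n - k) :=
  u_closed_aux (2 * n - k) n k h1 h2 le_rfl

/-- key: `n * u n k = k * choose (2n-k-1) (n-1)` for `1 ≤ k ≤ n`. -/
lemma n_mul_u (n k : ℕ) (h1 : 1 ≤ k) (h2 : k ≤ n) :
    n * u n k = k * Nat.choose (2 * n - k - 1) (n - 1) := by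
  rcases eq_or_lt_of_le h2 with heq | h2
  · subst heq
    rw [u_diag, show 2 * k - k - 1 = k - 1 by omega, Nat.choose_self, mul_one]
  · have hc := u_closed h1 h2
    set B1 := Nat.choose (2 * n - k - 1) (n - k) with hB1
    set B2 := Nat.choose (2 * n - k - 1) (n - k - 1) with hB2
    have hsym : Nat.choose (2 * n - k - 1) (n - 1) = B1 := by
      rw [hB1, ← Nat.choose_symm (show n - k ≤ 2 * n - k - 1 by omega)]
      congr 1
      omega
    have hkey : B1 * (n - k) = B2 * n := by
      have h := Nat.choose_succ_right_eq (2 * n - k - 1) (n - k - 1)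
      rw [show n - k - 1 + 1 = n - k by omega,
        show 2 * n - k - 1 - (n - k - 1) = n by omega] at h
      exact h
    rw [hsym]
    -- n * u = n * (B1 - B2) = n*B1 - n*B2 = n*B1 - (n-k)*B1 = k*B1
    have e1 : n * u n k + n * B2 = n * B1 := by
      rw [← Nat.mul_add, hc]
    have e2 : k * B1 + (n - k) * B1 = n * B1 := by
      rw [← Nat.add_mul]
      congr 1
      omega
    have e3 : (n - k) * B1 = n * B2 := by rw [mul_comm, hkey, mul_comm]
    omega

end MultAux

namespace MultAux

noncomputable def b (n : ℕ) : ℕ := ∑ k ∈ Finset.Icc 1 n, catalan (k - 1) * u n k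

lemma b_ext (i n : ℕ) (h : i ≤ n) :
    b i = ∑ k ∈ Finset.Icc 1 n, catalan (k - 1) * u i k := by
  rw [b]
  apply Finset.sum_subset (Finset.Icc_subset_Icc_right h)
  intro k hk hk'
  rw [Finset.mem_Icc] at hk hk'
  rw [u_eq_zero (by omega), mul_zero]

lemma hinner (n k l : ℕ) (hk : 1 ≤ k) (hl : 1 ≤ l) (hn : 1 ≤ n) :
    ∑ i ∈ Finset.Icc 1 (n - 1), u i k * u (n - i) l = u n (k + l) := by
  rw [u_conv]
  symm
  apply (Finset.sum_subset _ _).symm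
  · intro i hi
    rw [Finset.mem_Icc] at hi
    rw [Finset.mem_range]
    omega
  · intro i hi hi'
    rw [Finset.mem_range] at hi
    rw [Finset.mem_Icc] at hi'
    rcases Nat.eq_zero_or_pos i with rfl | hip
    · rw [u_eq_zero hk, zero_mul]
    · have : n - i = 0 := by omega
      rw [this, u_eq_zero hl, mul_zero]

lemma key_regroup (n : ℕ) :
    ∑ k ∈ Finset.Icc 1 n, ∑ l ∈ Finset.Icc 1 n,
        catalan (k - 1) * catalan (l - 1) * u n (k + l)
      = ∑ m ∈ Finset.Icc 2 n, catalan (m - 1) * u n m := by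
  -- write LHS over the product set, restrict to k+l ≤ n
  rw [← Finset.sum_product']
  rw [show (∑ p ∈ Finset.Icc 1 n ×ˢ Finset.Icc 1 n,
        catalan (p.1 - 1) * catalan (p.2 - 1) * u n (p.1 + p.2))
      = ∑ p ∈ (Finset.Icc 1 n ×ˢ Finset.Icc 1 n).filter (fun p => p.1 + p.2 ≤ n),
        catalan (p.1 - 1) * catalan (p.2 - 1) * u n (p.1 + p.2) from
    (Finset.sum_subset (Finset.filter_subset _ _) (by
      intro p hp hp'
      rw [Finset.mem_filter, not_and] at hp'
      have hnp := hp' hp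
      rw [u_eq_zero (by omega : n < p.1 + p.2), mul_zero])).symm]
  -- write RHS via the catalan recursion as a sum over a sigma set
  have hrhs : ∀ m ∈ Finset.Icc 2 n, catalan (m - 1) * u n m
      = ∑ ij ∈ Finset.HasAntidiagonal.antidiagonal (m - 2), catalan ij.1 * catalan ij.2 * u n m := by
    intro m hm
    rw [Finset.mem_Icc] at hm
    rw [show m - 1 = (m - 2) + 1 by omega, catalan_succ', Finset.sum_mul]
  rw [Finset.sum_congr rfl hrhs, Finset.sum_sigma']
  apply Finset.sum_bij' (i := fun p _ => (⟨p.1 + p.2, (p.1 - 1, p.2 - 1)⟩ :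
      (_ : ℕ) × ℕ × ℕ)) (j := fun q _ => (q.2.1 + 1, q.2.2 + 1))
  · intro p hp
    rw [Finset.mem_filter, Finset.mem_product, Finset.mem_Icc, Finset.mem_Icc] at hp
    rw [Finset.mem_sigma, Finset.mem_Icc, Finset.HasAntidiagonal.mem_antidiagonal]
    dsimp only
    omega
  · intro q hq
    rw [Finset.mem_sigma, Finset.mem_Icc, Finset.HasAntidiagonal.mem_antidiagonal] at hq
    rw [Finset.mem_filter, Finset.mem_product, Finset.mem_Icc, Finset.mem_Icc]
    omega
  · intro p hp
    rw [Finset.mem_filter, Finset.mem_product, Finset.mem_Icc, Finset.mem_Icc] at hp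
    ext <;> simp <;> omega
  · intro q hq
    rw [Finset.mem_sigma, Finset.mem_Icc, Finset.HasAntidiagonal.mem_antidiagonal] at hq
    obtain ⟨m, v⟩ := q
    obtain ⟨x, y⟩ := v
    simp only at hq ⊢
    simp only [Nat.add_sub_cancel]
    rw [show x + 1 + (y + 1) = m by omega]
  · intro p hp
    rfl

end MultAux

namespace MultAux

lemma b_rec (n : ℕ) (hn : 1 ≤ n) :
    b n = catalan (n - 1) + ∑ i ∈ Finset.Icc 1 (n - 1), b i * b (n - i) := by
  have step : ∑ i ∈ Finset.Icc 1 (n - 1), b i * b (n - i)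
      = ∑ m ∈ Finset.Icc 2 n, catalan (m - 1) * u n m := by
    rw [← key_regroup n]
    calc ∑ i ∈ Finset.Icc 1 (n - 1), b i * b (n - i)
        = ∑ i ∈ Finset.Icc 1 (n - 1), ∑ k ∈ Finset.Icc 1 n, ∑ l ∈ Finset.Icc 1 n,
            catalan (k - 1) * catalan (l - 1) * (u i k * u (n - i) l) := by
          apply Finset.sum_congr rfl
          intro i hi
          rw [Finset.mem_Icc] at hi
          rw [b_ext i n (by omega), b_ext (n - i) n (by omega), Finset.sum_mul_sum]
          apply Finset.sum_congr rfl; intro k _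
          apply Finset.sum_congr rfl; intro l _
          ring
      _ = ∑ k ∈ Finset.Icc 1 n, ∑ l ∈ Finset.Icc 1 n,
            catalan (k - 1) * catalan (l - 1) * u n (k + l) := by
          rw [Finset.sum_comm]
          apply Finset.sum_congr rfl; intro k hk
          rw [Finset.sum_comm]
          apply Finset.sum_congr rfl; intro l hl
          rw [Finset.mem_Icc] at hk hl
          rw [← Finset.mul_sum, hinner n k l (by omega) (by omega) hn]
  rw [step, b]
  rw [show Finset.Icc 1 n = insert 1 (Finset.Icc 2 n) by
      ext x; rw [Finset.mem_insert, Finset.mem_Icc, Finset.mem_Icc]; omega,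
    Finset.sum_insert (by rw [Finset.mem_Icc]; omega)]
  congr 1
  rw [catalan_zero, one_mul, show n = (n - 1) + 1 by omega, u_one, Nat.add_sub_cancel]

end MultAux

/-- Closed formula for the number of vertices of the n-th multiplihedron:
if `a 0 = 0` and `a n = C(n-1) + Σ_{i=1}^{n-1} a i * a (n-i)` for `n ≥ 1`,
then `a n = (1/n) Σ_{k=1}^{n} C(2n-k-1, n-1) · C(2k-2, k-1)` for all `n ≥ 1`
(stated multiplied through by `n`). -/
theorem multiplihedron_vertex_closed_formula (a : ℕ → ℕ) (h0 : a 0 = 0)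
    (hrec : ∀ n, 1 ≤ n →
      a n = catalan (n - 1) + ∑ i ∈ Finset.Icc 1 (n - 1), a i * a (n - i)) :
    ∀ n, 1 ≤ n → n * a n =
      ∑ k ∈ Finset.Icc 1 n,
        Nat.choose (2 * n - k - 1) (n - 1) * Nat.choose (2 * k - 2) (k - 1) := by
  have hab : ∀ n, a n = MultAux.b n := by
    intro n
    induction n using Nat.strong_induction_on with
    | _ n ih =>
      rcases Nat.eq_zero_or_pos n with rfl | hn
      · rw [h0, MultAux.b]
        simp
      · rw [hrec n hn, MultAux.b_rec n hn]
        congr 1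
        apply Finset.sum_congr rfl
        intro i hi
        rw [Finset.mem_Icc] at hi
        rw [ih i (by omega), ih (n - i) (by omega)]
  intro n hn
  rw [hab, MultAux.b, Finset.mul_sum]
  apply Finset.sum_congr rfl
  intro k hk
  rw [Finset.mem_Icc] at hk
  have h1 : k * catalan (k - 1) = Nat.choose (2 * k - 2) (k - 1) := by
    have h := succ_mul_catalan_eq_centralBinom (k - 1)
    rw [Nat.centralBinom] at h
    rw [show 2 * k - 2 = 2 * (k - 1) by omega, ← h, show k - 1 + 1 = k by omega]
  calc n * (catalan (k - 1) * MultAux.u n k)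
      = catalan (k - 1) * (n * MultAux.u n k) := by ring
    _ = catalan (k - 1) * (k * Nat.choose (2 * n - k - 1) (n - 1)) := by
        rw [MultAux.n_mul_u n k hk.1 hk.2]
    _ = (k * catalan (k - 1)) * Nat.choose (2 * n - k - 1) (n - 1) := by ring
    _ = _ := by rw [h1, mul_comm]
end

section
/- For n ≥ 2 and q ∈ (0,1), the convex hull of the 6 points obtained from 3-leaf painted binary trees, namely (1,2), (2,1), (q,2), (2,q), (q,2q), (2q,q) in ℝ², is a hexagon: each of the 6 points is a vertex (extreme point) of the hull. -/
open Set

/-- If a linear functional is strictly maximized on `s` at `p ∈ s`, then on the convex hull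
the maximum value is attained only at `p`. -/
lemma face_eq_singleton {E : Type*} [AddCommGroup E] [Module ℝ E]
    {s : Set E} {p : E} (hp : p ∈ s) (f : E →ₗ[ℝ] ℝ)
    (h : ∀ x ∈ s, x ≠ p → f x < f p) :
    ∀ x ∈ convexHull ℝ s, f x = f p → x = p := by
  intro x hx hfx
  rcases Set.eq_empty_or_nonempty (s \ {p}) with he | hne
  · have hs : s = {p} := by
      apply Set.eq_singleton_iff_unique_mem.2 ⟨hp, fun y hy => ?_⟩
      by_contra hyp
      exact Set.eq_empty_iff_forall_notMem.1 he y ⟨hy, hyp⟩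
    rw [hs, convexHull_singleton] at hx
    exact hx
  · have hins : insert p (s \ {p}) = s := Set.insert_diff_singleton.trans
      (Set.insert_eq_self.2 hp)
    rw [← hins, convexHull_insert hne, mem_convexJoin] at hx
    obtain ⟨a, ha, b, hb, hseg⟩ := hx
    rw [Set.mem_singleton_iff] at ha
    have hball : convexHull ℝ (s \ {p}) ⊆ {w | f w < f p} := by
      apply convexHull_min
      · intro y hy
        exact h y hy.1 hy.2
      · exact convex_halfSpace_lt f.isLinear _
    have hfb : f b < f p := hball hb
    obtain ⟨u, v, hu, hv, huv, hx⟩ := hseg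
    have hfeq : u * f p + v * f b = f x := by
      rw [← hx, ha]; simp [map_add, map_smul, smul_eq_mul]
    rw [hfx] at hfeq
    rcases eq_or_lt_of_le hv with hv0 | hv0
    · have hu1 : u = 1 := by linarith
      rw [← hx, ← hv0, hu1, ha]
      simp
    · exfalso
      have hsum : u * f p + v * f p = f p := by rw [← add_mul, huv, one_mul]
      have := mul_lt_mul_of_pos_left hfb hv0
      linarith

/-- A point of `s` at which some linear functional is strictly maximized is an extreme point
of the convex hull of `s`. -/
lemma extreme_of_strict_max {E : Type*} [AddCommGroup E] [Module ℝ E]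
    {s : Set E} {p : E} (hp : p ∈ s) (f : E →ₗ[ℝ] ℝ)
    (h : ∀ x ∈ s, x ≠ p → f x < f p) :
    p ∈ Set.extremePoints ℝ (convexHull ℝ s) := by
  refine ⟨subset_convexHull ℝ s hp, fun x₁ hx₁ x₂ hx₂ hseg => ?_⟩
  have hhull : convexHull ℝ s ⊆ {w | f w ≤ f p} := by
    apply convexHull_min
    · intro y hy
      show f y ≤ f p
      rcases eq_or_ne y p with rfl | hyp
      · exact le_rfl
      · exact (h y hy hyp).le
    · exact convex_halfSpace_le f.isLinear _
  have h1 : f x₁ ≤ f p := hhull hx₁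
  have h2 : f x₂ ≤ f p := hhull hx₂
  obtain ⟨u, v, hu, hv, huv, hx⟩ := hseg
  have hfeq : u * f x₁ + v * f x₂ = f p := by
    rw [← hx]; simp [map_add, map_smul, smul_eq_mul]
  have e1 : u * f x₁ ≤ u * f p := mul_le_mul_of_nonneg_left h1 hu.le
  have e2 : v * f x₂ ≤ v * f p := mul_le_mul_of_nonneg_left h2 hv.le
  have hsum : u * f p + v * f p = f p := by rw [← add_mul, huv, one_mul]
  have hf1 : f x₁ = f p := mul_left_cancel₀ hu.ne' (by linarith)
  have hf2 : f x₂ = f p := mul_left_cancel₀ hv.ne' (by linarith)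
  exact face_eq_singleton hp f h x₁ hx₁ hf1

/-- The linear functional `(x, y) ↦ c * x + d * y` on `ℝ²`. -/
def lf (c d : ℝ) : (ℝ × ℝ) →ₗ[ℝ] ℝ where
  toFun w := c * w.1 + d * w.2
  map_add' w z := by simp; ring
  map_smul' r w := by simp; ring

@[simp] lemma lf_apply (c d : ℝ) (w : ℝ × ℝ) : lf c d w = c * w.1 + d * w.2 := rfl

/-- For `q ∈ (0,1)`, the six points `(1,2), (2,1), (q,2), (2,q), (q,2q), (2q,q)`
in `ℝ²`, obtained from the six 3-leaf painted binary trees, are all extreme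
points of their convex hull: the hull is a hexagon. -/
theorem J3_hexagon (q : ℝ) (hq : q ∈ Set.Ioo (0 : ℝ) 1) :
    ∀ p ∈ ({((1 : ℝ), (2 : ℝ)), (2, 1), (q, 2), (2, q), (q, 2 * q), (2 * q, q)} :
        Set (ℝ × ℝ)),
      p ∈ Set.extremePoints ℝ (convexHull ℝ
        ({((1 : ℝ), (2 : ℝ)), (2, 1), (q, 2), (2, q), (q, 2 * q), (2 * q, q)} :
          Set (ℝ × ℝ))) := by
  obtain ⟨hq0, hq1⟩ := hq
  intro p hp
  simp only [Set.mem_insert_iff, Set.mem_singleton_iff] at hp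
  rcases hp with rfl | rfl | rfl | rfl | rfl | rfl
  · refine extreme_of_strict_max (by simp) (lf 1 2) ?_
    rintro x (rfl | rfl | rfl | rfl | rfl | rfl) hxp <;> first | exact absurd rfl hxp | (simp only [lf_apply]; nlinarith)
  · refine extreme_of_strict_max (by simp) (lf 2 1) ?_
    rintro x (rfl | rfl | rfl | rfl | rfl | rfl) hxp <;> first | exact absurd rfl hxp | (simp only [lf_apply]; nlinarith)
  · refine extreme_of_strict_max (by simp) (lf (-2) 1) ?_
    rintro x (rfl | rfl | rfl | rfl | rfl | rfl) hxp <;> first | exact absurd rfl hxp | (simp only [lf_apply]; nlinarith)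
  · refine extreme_of_strict_max (by simp) (lf 1 (-2)) ?_
    rintro x (rfl | rfl | rfl | rfl | rfl | rfl) hxp <;> first | exact absurd rfl hxp | (simp only [lf_apply]; nlinarith)
  · refine extreme_of_strict_max (by simp) (lf (-2) (-1)) ?_
    rintro x (rfl | rfl | rfl | rfl | rfl | rfl) hxp <;> first | exact absurd rfl hxp | (simp only [lf_apply]; nlinarith)
  · refine extreme_of_strict_max (by simp) (lf (-1) (-2)) ?_
    rintro x (rfl | rfl | rfl | rfl | rfl | rfl) hxp <;> first | exact absurd rfl hxp | (simp only [lf_apply]; nlinarith)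
end

section
/- For a painted binary tree t with k internal edges and n leaves, the solution space of the level-tree constraint equations (one equation per painted trivalent node, equating the leaf-number-weighted averages of painted interior edge lengths of the two subtrees) intersected with [0,1]^k is an (n−1)-dimensional polytope; in particular, the linear system has solution space of dimension n−1, and there exists a solution all of whose coordinates lie in (0, 1/2]. -/
/-- Number of interior edges of an unpainted subtree hung below a node,
including its own root edge (which is interior iff the subtree is not a
single leaf). -/
def UTree.ie : UTree → ℕ
  | .leaf => 0
  | .node l r => 1 + l.ie + r.ie

/-- Number of interior edges of a painted subtree hung below a painted node,
including its own (painted) root edge. -/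
def PTree.te : PTree → ℕ
  | .stump u => 1 + u.ie
  | .node l r => 1 + l.te + r.te

/-- Number of interior edges of a painted binary tree (root edge excluded). -/
def PTree.k : PTree → ℕ
  | .stump u => u.ie
  | .node l r => l.te + r.te

/-- Sum of the painted interior edge lengths of a decorated painted subtree,
including its root-edge length; lengths are listed root edge first, then the
lengths of the left subtree, then those of the right subtree. -/
noncomputable def PTree.psum : PTree → List ℝ → ℝ
  | .stump _, d => d.headI
  | .node l r, d =>
      d.headI + l.psum (d.tail.take l.te) + r.psum (d.tail.drop l.te)

/-- The level-tree constraints on a decorated painted subtree (decoration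
includes its root-edge length): at each painted type (2) node, the
leaf-number-weighted averages of the painted interior edge lengths of the two
subtrees agree (stated cross-multiplied). -/
def PTree.okI : PTree → List ℝ → Prop
  | .stump _, _ => True
  | .node l r, d =>
      (r.leaves : ℝ) * l.psum (d.tail.take l.te) =
          (l.leaves : ℝ) * r.psum (d.tail.drop l.te) ∧
        l.okI (d.tail.take l.te) ∧ r.okI (d.tail.drop l.te)

/-- The level-tree constraints on a length assignment to the `k` interior
edges of a painted binary tree (a dummy root-edge length `0` is prepended;
it occurs in no constraint). -/
def PTree.ok (t : PTree) (d : List ℝ) : Prop := t.okI ((0 : ℝ) :: d)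

/-! ### Auxiliary lemmas -/

lemma UTree.leaves_eq (u : UTree) : u.leaves = u.ie + 1 := by
  induction u with
  | leaf => rfl
  | node l r ihl ihr => simp only [UTree.leaves, UTree.ie, ihl, ihr]; omega

lemma PTree.stump_te (u : UTree) : (PTree.stump u).te = (PTree.stump u).leaves := by
  simp only [PTree.te, PTree.leaves, UTree.leaves_eq]; omega

lemma PTree.node_te (l r : PTree) : (PTree.node l r).te = (l.te + r.te) + 1 := by
  simp only [PTree.te]; omega

lemma ofFn_comp_cast {m n : ℕ} (e : m = n) (f : Fin n → ℝ) :
    List.ofFn (f ∘ Fin.cast e) = List.ofFn f := by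
  subst e; rfl

lemma ofFn_fin_cons {n : ℕ} (a : ℝ) (f : Fin n → ℝ) :
    List.ofFn (Fin.cons a f) = a :: List.ofFn f := by
  simp [List.ofFn_succ]

lemma headI_ofFn {n : ℕ} (f : Fin n → ℝ) (h : 0 < n) :
    (List.ofFn f).headI = f ⟨0, h⟩ := by
  cases n with
  | zero => omega
  | succ m =>
    rw [List.ofFn_succ]
    exact congrArg f (by ext; simp)

/-! ### The parametrization -/

noncomputable def auxL (a b : ℕ) (ha : 1 ≤ a) (hb : 1 ≤ b) (y : Fin (a + b) → ℝ) :
    Fin a → ℝ :=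
  fun i => if i.val = 0 then (a : ℝ) * y ⟨1, by omega⟩
           else y ⟨1 + i.val, by have := i.isLt; omega⟩

noncomputable def auxR (a b : ℕ) (ha : 1 ≤ a) (hb : 1 ≤ b) (y : Fin (a + b) → ℝ) :
    Fin b → ℝ :=
  fun i => if i.val = 0 then (b : ℝ) * y ⟨1, by omega⟩
           else y ⟨a + i.val, by have := i.isLt; omega⟩

lemma PTree.node_pos0 (l r : PTree) : 0 < (PTree.node l r).leaves := by
  have := l.one_le_leaves; have := r.one_le_leaves; simp only [PTree.leaves]; omega

lemma PTree.node_pos1 (l r : PTree) : 1 < (PTree.node l r).leaves := by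
  have := l.one_le_leaves; have := r.one_le_leaves; simp only [PTree.leaves]; omega

noncomputable def Pfun : (t : PTree) → (Fin t.leaves → ℝ) → Fin t.te → ℝ
  | .stump u, y => y ∘ Fin.cast (PTree.stump_te u)
  | .node l r, y =>
      (Fin.cons
        (y ⟨0, PTree.node_pos0 l r⟩
          - ((l.leaves + r.leaves : ℕ) : ℝ) * y ⟨1, PTree.node_pos1 l r⟩)
        (Fin.append (Pfun l (auxL l.leaves r.leaves l.one_le_leaves r.one_le_leaves y))
                    (Pfun r (auxR l.leaves r.leaves l.one_le_leaves r.one_le_leaves y))))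
        ∘ Fin.cast (PTree.node_te l r)

lemma ofFn_Pfun_node (l r : PTree) (y : Fin (PTree.node l r).leaves → ℝ) :
    List.ofFn (Pfun (.node l r) y) =
      (y ⟨0, PTree.node_pos0 l r⟩
          - ((l.leaves + r.leaves : ℕ) : ℝ) * y ⟨1, PTree.node_pos1 l r⟩)
        :: (List.ofFn (Pfun l (auxL l.leaves r.leaves l.one_le_leaves r.one_le_leaves y)) ++
            List.ofFn (Pfun r (auxR l.leaves r.leaves l.one_le_leaves r.one_le_leaves y))) := by
  show List.ofFn ((Fin.cons _ (Fin.append _ _)) ∘ Fin.cast (PTree.node_te l r)) = _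
  rw [ofFn_comp_cast, ofFn_fin_cons, List.ofFn_fin_append]

lemma psum_node (l r : PTree) (a : ℝ) (dl dr : List ℝ) (h : dl.length = l.te) :
    (PTree.node l r).psum (a :: (dl ++ dr)) = a + l.psum dl + r.psum dr := by
  simp only [PTree.psum, List.headI, List.tail_cons, List.take_left' h, List.drop_left' h]

lemma okI_node (l r : PTree) (a : ℝ) (dl dr : List ℝ) (h : dl.length = l.te) :
    (PTree.node l r).okI (a :: (dl ++ dr)) ↔
      ((r.leaves : ℝ) * l.psum dl = (l.leaves : ℝ) * r.psum dr ∧ l.okI dl ∧ r.okI dr) := by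
  simp only [PTree.okI, List.tail_cons, List.take_left' h, List.drop_left' h]

lemma psum_Pfun (t : PTree) : ∀ y : Fin t.leaves → ℝ,
    t.psum (List.ofFn (Pfun t y)) = y ⟨0, t.one_le_leaves⟩ := by
  induction t with
  | stump u =>
    intro y
    show (List.ofFn (y ∘ Fin.cast (PTree.stump_te u))).headI = _
    rw [ofFn_comp_cast]
    exact headI_ofFn y _
  | node l r ihl ihr =>
    intro y
    rw [ofFn_Pfun_node, psum_node _ _ _ _ _ (by simp), ihl, ihr]
    simp only [auxL, auxR, reduceIte]
    push_cast
    exact (fun a b L R : ℝ => by ring : ∀ a b L R : ℝ, a - (L + R) * b + L * b + R * b = a) _ _ _ _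

lemma okI_Pfun (t : PTree) : ∀ y : Fin t.leaves → ℝ, t.okI (List.ofFn (Pfun t y)) := by
  induction t with
  | stump u => intro y; trivial
  | node l r ihl ihr =>
    intro y
    rw [ofFn_Pfun_node, okI_node _ _ _ _ _ (by simp)]
    refine ⟨?_, ihl _, ihr _⟩
    rw [psum_Pfun l, psum_Pfun r]
    simp only [auxL, auxR, reduceIte]
    ring

lemma comp_cast_inj {m n : ℕ} (e : m = n) {f f' : Fin n → ℝ}
    (h : f ∘ Fin.cast e = f' ∘ Fin.cast e) : f = f' := by
  subst e; exact h

lemma cons_inj {n : ℕ} {a a' : ℝ} {f f' : Fin n → ℝ}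
    (h : Fin.cons a f = (Fin.cons a' f' : Fin (n + 1) → ℝ)) : a = a' ∧ f = f' := by
  constructor
  · have := congrFun h 0; simpa using this
  · funext i; have := congrFun h i.succ; simpa using this

lemma append_inj {a b : ℕ} {f f' : Fin a → ℝ} {g g' : Fin b → ℝ}
    (h : Fin.append f g = Fin.append f' g') : f = f' ∧ g = g' := by
  constructor
  · funext i; have := congrFun h (Fin.castAdd b i)
    simpa [Fin.append_left] using this
  · funext i; have := congrFun h (Fin.natAdd a i)
    simpa [Fin.append_right] using this

lemma Pfun_inj (t : PTree) : ∀ y y' : Fin t.leaves → ℝ, Pfun t y = Pfun t y' → y = y' := by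
  induction t with
  | stump u =>
    intro y y' h
    funext i
    have h2 : ∀ g : Fin (PTree.stump u).leaves → ℝ,
        Pfun (.stump u) g (Fin.cast (PTree.stump_te u).symm i) = g i := by
      intro g
      show g (Fin.cast _ (Fin.cast _ i)) = g i
      exact congrArg g (Fin.ext (by simp))
    rw [← h2 y, ← h2 y', h]
  | node l r ihl ihr =>
    intro y y' h
    simp only [Pfun] at h
    replace h := comp_cast_inj _ h
    obtain ⟨hA, hF⟩ := cons_inj h
    obtain ⟨hL, hR⟩ := append_inj hF
    have hyl := ihl _ _ hL
    have hyr := ihr _ _ hR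
    have hlpos : (0:ℝ) < (l.leaves : ℝ) := by exact_mod_cast l.one_le_leaves
    have hm : y ⟨1, PTree.node_pos1 l r⟩ = y' ⟨1, PTree.node_pos1 l r⟩ := by
      have h01 := congrFun hyl ⟨0, l.one_le_leaves⟩
      simp only [auxL, reduceIte] at h01
      exact mul_left_cancel₀ (ne_of_gt hlpos) h01
    funext i
    obtain ⟨v, hv⟩ := i
    have hv' : v < l.leaves + r.leaves := hv
    by_cases h0 : v = 0
    · subst h0
      have hA' := hA
      rw [hm] at hA'
      have goal' : y ⟨0, hv⟩ - ((l.leaves + r.leaves : ℕ) : ℝ) * y' ⟨1, PTree.node_pos1 l r⟩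
          = y' ⟨0, hv⟩ - ((l.leaves + r.leaves : ℕ) : ℝ) * y' ⟨1, PTree.node_pos1 l r⟩ := hA'
      linarith
    by_cases h1 : v = 1
    · subst h1; exact hm
    by_cases hle : v ≤ l.leaves
    · have hthis := congrFun hyl ⟨v - 1, by omega⟩
      simp only [auxL, if_neg (show ¬(v - 1 = 0) by omega)] at hthis
      have hidx : (⟨v, hv⟩ : Fin ((PTree.node l r).leaves))
          = ⟨1 + (v - 1), by simp only [PTree.leaves]; omega⟩ := Fin.mk_eq_mk.mpr (by omega)
      rw [hidx]
      exact hthis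
    · have hthis := congrFun hyr ⟨v - l.leaves, by omega⟩
      simp only [auxR, if_neg (show ¬(v - l.leaves = 0) by omega)] at hthis
      have hidx : (⟨v, hv⟩ : Fin ((PTree.node l r).leaves))
          = ⟨l.leaves + (v - l.leaves), by simp only [PTree.leaves]; omega⟩ :=
        Fin.mk_eq_mk.mpr (by omega)
      rw [hidx]
      exact hthis

lemma eq_cons_append {m a b : ℕ} (e : m = (a + b) + 1) (x : Fin m → ℝ) :
    x = (Fin.cons (x (Fin.cast e.symm 0))
          (Fin.append (fun i : Fin a => x (Fin.cast e.symm (Fin.castAdd b i).succ))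
                      (fun i : Fin b => x (Fin.cast e.symm (Fin.natAdd a i).succ))))
        ∘ Fin.cast e := by
  subst e
  funext j
  simp only [Function.comp_apply, Fin.cast_refl, id_eq]
  induction j using Fin.cases with
  | zero => simp
  | succ i =>
    simp only [Fin.cons_succ]
    induction i using Fin.addCases with
    | left i => simp [Fin.append_left]
    | right i => simp [Fin.append_right]

noncomputable def glue (a b : ℕ) (ha : 1 ≤ a) (hb : 1 ≤ b) (s m : ℝ)
    (fl : Fin a → ℝ) (fr : Fin b → ℝ) : Fin (a + b) → ℝ :=
  fun i => if i.val = 0 then s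
           else if i.val = 1 then m
           else if h : i.val ≤ a then fl ⟨i.val - 1, by omega⟩
           else fr ⟨i.val - a, by have := i.isLt; omega⟩

lemma glue_eval0 {a b : ℕ} {ha hb} {s m : ℝ} {fl fr} (i : Fin (a + b)) (h : i.val = 0) :
    glue a b ha hb s m fl fr i = s := by simp [glue, h]

lemma glue_eval1 {a b : ℕ} {ha hb} {s m : ℝ} {fl fr} (i : Fin (a + b)) (h : i.val = 1) :
    glue a b ha hb s m fl fr i = m := by simp [glue, h]

lemma glue_eval_left {a b : ℕ} {ha hb} {s m : ℝ} {fl : Fin a → ℝ} {fr : Fin b → ℝ}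
    (i : Fin (a + b)) (h1 : 2 ≤ i.val) (h2 : i.val ≤ a) (j : Fin a) (hj : j.val = i.val - 1) :
    glue a b ha hb s m fl fr i = fl j := by
  rw [glue, if_neg (by omega), if_neg (by omega), dif_pos h2]
  exact congrArg fl (Fin.ext (by simp; omega))

lemma glue_eval_right {a b : ℕ} {ha hb} {s m : ℝ} {fl : Fin a → ℝ} {fr : Fin b → ℝ}
    (i : Fin (a + b)) (h2 : a < i.val) (j : Fin b) (hj : j.val = i.val - a) :
    glue a b ha hb s m fl fr i = fr j := by
  rw [glue, if_neg (by omega), if_neg (by omega), dif_neg (by omega)]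
  exact congrArg fr (Fin.ext (by simp; omega))

lemma auxL_glue {a b : ℕ} {ha hb} {s m : ℝ} {fl : Fin a → ℝ} {fr : Fin b → ℝ}
    (h : (a : ℝ) * m = fl ⟨0, ha⟩) :
    auxL a b ha hb (glue a b ha hb s m fl fr) = fl := by
  funext j
  simp only [auxL]
  by_cases hj : j.val = 0
  · rw [if_pos hj, glue_eval1 _ rfl, h]
    exact congrArg fl (Fin.ext (by simp; omega))
  · rw [if_neg hj, glue_eval_left _ (by simp; omega) (by simp; omega) j (by simp)]

lemma auxR_glue {a b : ℕ} {ha hb} {s m : ℝ} {fl : Fin a → ℝ} {fr : Fin b → ℝ}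
    (h : (b : ℝ) * m = fr ⟨0, hb⟩) :
    auxR a b ha hb (glue a b ha hb s m fl fr) = fr := by
  funext j
  simp only [auxR]
  by_cases hj : j.val = 0
  · rw [if_pos hj, glue_eval1 _ rfl, h]
    exact congrArg fr (Fin.ext (by simp; omega))
  · rw [if_neg hj, glue_eval_right _ (by simp; omega) j (by simp)]

lemma Pfun_surj (t : PTree) : ∀ x : Fin t.te → ℝ, t.okI (List.ofFn x) → ∃ y, Pfun t y = x := by
  induction t with
  | stump u =>
    intro x _
    refine ⟨x ∘ Fin.cast (PTree.stump_te u).symm, ?_⟩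
    funext i
    show x (Fin.cast _ (Fin.cast _ i)) = x i
    exact congrArg x (Fin.ext (by simp))
  | node l r ihl ihr =>
    intro x hok
    have e := PTree.node_te l r
    have hx := eq_cons_append e x
    set dl : Fin l.te → ℝ := fun i => x (Fin.cast e.symm (Fin.castAdd r.te i).succ) with hdl
    set dr : Fin r.te → ℝ := fun i => x (Fin.cast e.symm (Fin.natAdd l.te i).succ) with hdr
    have hofn : List.ofFn x = x (Fin.cast e.symm 0) :: (List.ofFn dl ++ List.ofFn dr) := by
      conv_lhs => rw [hx]
      rw [ofFn_comp_cast, ofFn_fin_cons, List.ofFn_fin_append]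
    rw [hofn, okI_node _ _ _ _ _ (by simp)] at hok
    obtain ⟨hc, hol, hor⟩ := hok
    obtain ⟨yl, hyl⟩ := ihl dl hol
    obtain ⟨yr, hyr⟩ := ihr dr hor
    have hpl : l.psum (List.ofFn dl) = yl ⟨0, l.one_le_leaves⟩ := by
      conv_lhs => rw [← hyl]
      exact psum_Pfun l yl
    have hpr : r.psum (List.ofFn dr) = yr ⟨0, r.one_le_leaves⟩ := by
      conv_lhs => rw [← hyr]
      exact psum_Pfun r yr
    rw [hpl, hpr] at hc
    have hl0 : (0:ℝ) < (l.leaves : ℝ) := by exact_mod_cast l.one_le_leaves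
    have hr0 : (0:ℝ) < (r.leaves : ℝ) := by exact_mod_cast r.one_le_leaves
    refine ⟨glue l.leaves r.leaves l.one_le_leaves r.one_le_leaves
      (x (Fin.cast e.symm 0) + yl ⟨0, l.one_le_leaves⟩ + yr ⟨0, r.one_le_leaves⟩)
      (yl ⟨0, l.one_le_leaves⟩ / (l.leaves : ℝ)) yl yr, ?_⟩
    conv_rhs => rw [hx]
    show (Fin.cons _ (Fin.append _ _)) ∘ Fin.cast (PTree.node_te l r) = _
    refine congrArg (fun F => F ∘ Fin.cast (PTree.node_te l r)) ?_
    rw [auxL_glue (by field_simp), auxR_glue (by field_simp; linear_combination hc), hyl, hyr]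
    congr 1
    erw [glue_eval0 (⟨0, PTree.node_pos0 l r⟩ : Fin (l.leaves + r.leaves)) rfl,
      glue_eval1 (⟨1, PTree.node_pos1 l r⟩ : Fin (l.leaves + r.leaves)) rfl]
    field_simp
    push_cast; ring
    linear_combination -hc

lemma auxL_add {a b : ℕ} {ha hb} (y y' : Fin (a + b) → ℝ) :
    auxL a b ha hb (y + y') = auxL a b ha hb y + auxL a b ha hb y' := by
  funext j
  simp only [auxL, Pi.add_apply]
  by_cases hj : j.val = 0 <;> simp [hj, mul_add]

lemma auxR_add {a b : ℕ} {ha hb} (y y' : Fin (a + b) → ℝ) :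
    auxR a b ha hb (y + y') = auxR a b ha hb y + auxR a b ha hb y' := by
  funext j
  simp only [auxR, Pi.add_apply]
  by_cases hj : j.val = 0 <;> simp [hj, mul_add]

lemma auxL_smul {a b : ℕ} {ha hb} (c : ℝ) (y : Fin (a + b) → ℝ) :
    auxL a b ha hb (c • y) = c • auxL a b ha hb y := by
  funext j
  simp only [auxL, Pi.smul_apply, smul_eq_mul]
  by_cases hj : j.val = 0 <;> simp [hj] <;> ring

lemma auxR_smul {a b : ℕ} {ha hb} (c : ℝ) (y : Fin (a + b) → ℝ) :
    auxR a b ha hb (c • y) = c • auxR a b ha hb y := by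
  funext j
  simp only [auxR, Pi.smul_apply, smul_eq_mul]
  by_cases hj : j.val = 0 <;> simp [hj] <;> ring

lemma Pfun_add (t : PTree) : ∀ y y' : Fin t.leaves → ℝ,
    Pfun t (y + y') = Pfun t y + Pfun t y' := by
  induction t with
  | stump u => intro y y'; rfl
  | node l r ihl ihr =>
    intro y y'
    simp only [Pfun]
    rw [show auxL l.leaves r.leaves l.one_le_leaves r.one_le_leaves (y + y') = _ from
          auxL_add y y',
        show auxR l.leaves r.leaves l.one_le_leaves r.one_le_leaves (y + y') = _ from
          auxR_add y y', ihl, ihr]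
    funext j
    simp only [Function.comp_apply, Pi.add_apply]
    generalize Fin.cast (PTree.node_te l r) j = i
    induction i using Fin.cases with
    | zero => simp only [Fin.cons_zero, Pi.add_apply]; ring
    | succ i2 =>
      simp only [Fin.cons_succ]
      induction i2 using Fin.addCases with
      | left i3 => simp [Fin.append_left]
      | right i3 => simp [Fin.append_right]

lemma Pfun_smul (t : PTree) : ∀ (c : ℝ) (y : Fin t.leaves → ℝ),
    Pfun t (c • y) = c • Pfun t y := by
  induction t with
  | stump u => intro c y; rfl
  | node l r ihl ihr =>
    intro c y
    simp only [Pfun]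
    rw [show auxL l.leaves r.leaves l.one_le_leaves r.one_le_leaves (c • y) = _ from
          auxL_smul c y,
        show auxR l.leaves r.leaves l.one_le_leaves r.one_le_leaves (c • y) = _ from
          auxR_smul c y, ihl, ihr]
    funext j
    simp only [Function.comp_apply, Pi.smul_apply, smul_eq_mul]
    generalize Fin.cast (PTree.node_te l r) j = i
    induction i using Fin.cases with
    | zero => simp only [Fin.cons_zero, Pi.smul_apply, smul_eq_mul]; ring
    | succ i2 =>
      simp only [Fin.cons_succ]
      induction i2 using Fin.addCases with
      | left i3 => simp [Fin.append_left]
      | right i3 => simp [Fin.append_right]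

noncomputable def Pmap (t : PTree) : (Fin t.leaves → ℝ) →ₗ[ℝ] (Fin t.te → ℝ) where
  toFun := Pfun t
  map_add' := Pfun_add t
  map_smul' := Pfun_smul t

lemma exists_pos (t : PTree) : ∀ s : ℝ, 0 < s →
    ∃ x : Fin t.te → ℝ, t.okI (List.ofFn x) ∧ t.psum (List.ofFn x) = s ∧
      ∀ i, 0 < x i ∧ x i ≤ s := by
  induction t with
  | stump u =>
    intro s hs
    refine ⟨fun _ => s, trivial, ?_, fun i => ⟨hs, le_refl s⟩⟩
    show (List.ofFn fun _ : Fin (PTree.stump u).te => s).headI = s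
    rw [headI_ofFn _ (by simp only [PTree.te]; omega)]
  | node l r ihl ihr =>
    intro s hs
    have hl0 : (0:ℝ) < (l.leaves : ℝ) := by exact_mod_cast l.one_le_leaves
    have hr0 : (0:ℝ) < (r.leaves : ℝ) := by exact_mod_cast r.one_le_leaves
    have hL : (0:ℝ) < (l.leaves : ℝ) + (r.leaves : ℝ) := by linarith
    obtain ⟨xl, hxl_ok, hxl_sum, hxl_mem⟩ :=
      ihl (s / 2 * ((l.leaves : ℝ) / ((l.leaves : ℝ) + (r.leaves : ℝ)))) (by positivity)
    obtain ⟨xr, hxr_ok, hxr_sum, hxr_mem⟩ :=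
      ihr (s / 2 * ((r.leaves : ℝ) / ((l.leaves : ℝ) + (r.leaves : ℝ)))) (by positivity)
    have hofn : List.ofFn ((Fin.cons (s/2) (Fin.append xl xr)) ∘ Fin.cast (PTree.node_te l r))
        = (s/2) :: (List.ofFn xl ++ List.ofFn xr) := by
      rw [ofFn_comp_cast, ofFn_fin_cons, List.ofFn_fin_append]
    refine ⟨(Fin.cons (s/2) (Fin.append xl xr)) ∘ Fin.cast (PTree.node_te l r), ?_, ?_, ?_⟩
    · rw [hofn, okI_node _ _ _ _ _ (by simp)]
      refine ⟨?_, hxl_ok, hxr_ok⟩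
      rw [hxl_sum, hxr_sum]
      field_simp
    · rw [hofn, psum_node _ _ _ _ _ (by simp), hxl_sum, hxr_sum]
      field_simp
      ring
    · intro i
      have key : ∀ jj : Fin ((l.te + r.te) + 1),
          0 < (Fin.cons (s/2) (Fin.append xl xr) : Fin ((l.te + r.te) + 1) → ℝ) jj ∧
            (Fin.cons (s/2) (Fin.append xl xr) : Fin ((l.te + r.te) + 1) → ℝ) jj ≤ s := by
        intro jj
        induction jj using Fin.cases with
        | zero =>
          simp only [Fin.cons_zero]
          exact ⟨by positivity, by linarith⟩
        | succ i2 =>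
          simp only [Fin.cons_succ]
          have hlle : (l.leaves : ℝ) / ((l.leaves : ℝ) + (r.leaves : ℝ)) ≤ 1 := by
            rw [div_le_one hL]; linarith
          have hrle : (r.leaves : ℝ) / ((l.leaves : ℝ) + (r.leaves : ℝ)) ≤ 1 := by
            rw [div_le_one hL]; linarith
          induction i2 using Fin.addCases with
          | left i3 =>
            obtain ⟨h1, h2⟩ := hxl_mem i3
            rw [Fin.append_left]
            refine ⟨h1, ?_⟩
            nlinarith
          | right i3 =>
            obtain ⟨h1, h2⟩ := hxr_mem i3
            rw [Fin.append_right]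
            refine ⟨h1, ?_⟩
            nlinarith
      exact key (Fin.cast (PTree.node_te l r) i)

lemma Pfun_zero (t : PTree) : Pfun t 0 = 0 := map_zero (Pmap t)

lemma psum_ofFn_zero (t : PTree) : t.psum (List.ofFn (0 : Fin t.te → ℝ)) = 0 := by
  have h := psum_Pfun t 0
  rw [Pfun_zero] at h
  simpa using h

lemma okI_ofFn_zero (t : PTree) : t.okI (List.ofFn (0 : Fin t.te → ℝ)) := by
  have h := okI_Pfun t 0
  rwa [Pfun_zero] at h

lemma mem_range_Pmap (t : PTree) (x : Fin t.te → ℝ) :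
    x ∈ LinearMap.range (Pmap t) ↔ t.okI (List.ofFn x) := by
  constructor
  · rintro ⟨y, rfl⟩
    exact okI_Pfun t y
  · intro hx
    obtain ⟨y, hy⟩ := Pfun_surj t x hx
    exact ⟨y, hy⟩

lemma finrank_range_Pmap (t : PTree) :
    Module.finrank ℝ (LinearMap.range (Pmap t)) = t.leaves := by
  rw [LinearMap.finrank_range_of_inj (fun y y' => Pfun_inj t y y')]
  exact Module.finrank_fin_fun ℝ

/-- For a painted binary tree `t` with `n` leaves and `k` interior edges, the
solution space of the level-tree constraint equations is a linear subspace of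
`ℝ^k` of dimension `n - 1`, and there is a solution all of whose coordinates
lie in `(0, 1/2]`; hence its intersection with `[0,1]^k` is an
`(n-1)`-dimensional polytope. -/
theorem level_tree_solution_space (t : PTree) (n : ℕ) (h : t.leaves = n) :
    (∃ V : Submodule ℝ (Fin t.k → ℝ),
        (∀ x : Fin t.k → ℝ, x ∈ V ↔ t.ok (List.ofFn x)) ∧
          Module.finrank ℝ V = n - 1) ∧
      ∃ x : Fin t.k → ℝ, t.ok (List.ofFn x) ∧
        ∀ i, x i ∈ Set.Ioc (0 : ℝ) (1 / 2) := by
  subst h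
  constructor
  · -- the solution subspace
    cases t with
    | stump u =>
      refine ⟨⊤, fun x => ⟨fun _ => trivial, fun _ => Submodule.mem_top⟩, ?_⟩
      rw [finrank_top, Module.finrank_fin_fun]
      simp only [PTree.k, PTree.leaves, UTree.leaves_eq]
      omega
    | node l r =>
      have e : (PTree.node l r).te = (PTree.node l r).k + 1 := PTree.node_te l r
      set π : (Fin (PTree.node l r).te → ℝ) →ₗ[ℝ] (Fin (PTree.node l r).k → ℝ) :=
        LinearMap.funLeft ℝ ℝ (fun i : Fin (PTree.node l r).k => Fin.cast e.symm i.succ)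
        with hπ
      set W := LinearMap.range (Pmap (PTree.node l r)) with hWdef
      have hcastsucc : ∀ i : Fin (PTree.node l r).k,
          Fin.cast e (Fin.cast e.symm i.succ) = i.succ := by
        intro i; exact Fin.ext (by simp)
      have hcast0 : Fin.cast e (Fin.cast e.symm 0) = 0 := Fin.ext (by simp)
      refine ⟨W.map π, ?_, ?_⟩
      · intro x
        constructor
        · rintro ⟨w, hwW, rfl⟩
          have hok := (mem_range_Pmap _ w).mp hwW
          have hofn : List.ofFn w = w (Fin.cast e.symm 0) :: List.ofFn (π w) := by
            rw [← ofFn_comp_cast e.symm w, List.ofFn_succ]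
            rfl
          rw [hofn] at hok
          show (PTree.node l r).okI (0 :: List.ofFn (π w))
          exact hok
        · intro hok
          refine ⟨(Fin.cons 0 x : Fin ((PTree.node l r).k + 1) → ℝ) ∘ Fin.cast e, ?_, ?_⟩
          · apply (mem_range_Pmap _ _).mpr
            rw [ofFn_comp_cast, ofFn_fin_cons]
            exact hok
          · funext i
            show (Fin.cons 0 x : Fin _ → ℝ) (Fin.cast e (Fin.cast e.symm i.succ)) = x i
            rw [hcastsucc i]
            simp
      · have hρ : W.map π = LinearMap.range (π.comp W.subtype) := by
          rw [LinearMap.range_comp, Submodule.range_subtype]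
        rw [hρ]
        set ρ := π.comp W.subtype with hρdef
        set δ : Fin (PTree.node l r).te → ℝ :=
          (Fin.cons 1 (0 : Fin ((PTree.node l r).k) → ℝ)) ∘ Fin.cast e with hδdef
        have hδ0 : δ (Fin.cast e.symm 0) = 1 := by
          show (Fin.cons 1 _ : Fin _ → ℝ) (Fin.cast e (Fin.cast e.symm 0)) = 1
          rw [hcast0]
          simp
        have hδsucc : ∀ i : Fin (PTree.node l r).k, δ (Fin.cast e.symm i.succ) = 0 := by
          intro i
          show (Fin.cons 1 _ : Fin _ → ℝ) (Fin.cast e (Fin.cast e.symm i.succ)) = 0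
          rw [hcastsucc i]
          simp
        have hzero_split : (0 : Fin ((PTree.node l r).k) → ℝ)
            = Fin.append (0 : Fin l.te → ℝ) (0 : Fin r.te → ℝ) := by
          funext j
          induction j using Fin.addCases with
          | left i3 => simp [Fin.append_left]; rfl
          | right i3 => simp [Fin.append_right]; rfl
        have hδW : δ ∈ W := by
          apply (mem_range_Pmap _ _).mpr
          rw [hδdef, ofFn_comp_cast, ofFn_fin_cons, hzero_split]
          show (PTree.node l r).okI (1 :: List.ofFn (Fin.append (0 : Fin l.te → ℝ) (0 : Fin r.te → ℝ)))
          rw [List.ofFn_fin_append,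
            okI_node _ _ _ _ _ (by simp)]
          refine ⟨?_, okI_ofFn_zero l, okI_ofFn_zero r⟩
          rw [psum_ofFn_zero l, psum_ofFn_zero r]
          ring
        set w0 : W := ⟨δ, hδW⟩ with hw0def
        have hw0ne : w0 ≠ 0 := by
          intro hcon
          have hval : δ = 0 := congrArg Subtype.val hcon
          rw [hval] at hδ0
          simpa using hδ0
        have hker : LinearMap.ker ρ = Submodule.span ℝ {w0} := by
          apply le_antisymm
          · rintro ⟨w, hwW⟩ hw
            have hπw : ∀ i : Fin (PTree.node l r).k, w (Fin.cast e.symm i.succ) = 0 :=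
              fun i => congrFun (LinearMap.mem_ker.mp hw) i
            have hweq : w = w (Fin.cast e.symm 0) • δ := by
              funext j
              have hj : j = Fin.cast e.symm (Fin.cast e j) := Fin.ext (by simp)
              rw [hj]
              generalize Fin.cast e j = p
              induction p using Fin.cases with
              | zero =>
                rw [Pi.smul_apply, hδ0, smul_eq_mul, mul_one]
              | succ i2 =>
                rw [Pi.smul_apply, hδsucc i2, hπw i2, smul_eq_mul, mul_zero]
            rw [Submodule.mem_span_singleton]
            exact ⟨w (Fin.cast e.symm 0), Subtype.ext hweq.symm⟩
          · rw [Submodule.span_singleton_le_iff_mem]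
            apply LinearMap.mem_ker.mpr
            funext i
            show δ (Fin.cast e.symm i.succ) = 0
            exact hδsucc i
        have hfin := LinearMap.finrank_range_add_finrank_ker ρ
        rw [hker, finrank_span_singleton hw0ne] at hfin
        have hWfin : Module.finrank ℝ W = (PTree.node l r).leaves := finrank_range_Pmap _
        rw [hWfin] at hfin
        have hl1 := l.one_le_leaves
        have hr1 := r.one_le_leaves
        simp only [PTree.leaves] at hfin ⊢
        omega
  · -- the positive solution
    cases t with
    | stump u =>
      exact ⟨fun _ => 1/2, trivial, fun i => ⟨by norm_num, le_refl _⟩⟩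
    | node l r =>
      have hl0 : (0:ℝ) < (l.leaves : ℝ) := by exact_mod_cast l.one_le_leaves
      have hr0 : (0:ℝ) < (r.leaves : ℝ) := by exact_mod_cast r.one_le_leaves
      have hL : (0:ℝ) < (l.leaves : ℝ) + (r.leaves : ℝ) := by linarith
      obtain ⟨xl, hxl_ok, hxl_sum, hxl_mem⟩ :=
        exists_pos l (1/2 * ((l.leaves : ℝ) / ((l.leaves : ℝ) + (r.leaves : ℝ))))
          (by positivity)
      obtain ⟨xr, hxr_ok, hxr_sum, hxr_mem⟩ :=
        exists_pos r (1/2 * ((r.leaves : ℝ) / ((l.leaves : ℝ) + (r.leaves : ℝ))))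
          (by positivity)
      refine ⟨Fin.append xl xr, ?_, ?_⟩
      · show (PTree.node l r).okI (0 :: List.ofFn (Fin.append xl xr))
        rw [List.ofFn_fin_append, okI_node _ _ _ _ _ (by simp)]
        refine ⟨?_, hxl_ok, hxr_ok⟩
        rw [hxl_sum, hxr_sum]
        field_simp
      · have key : ∀ j : Fin (l.te + r.te),
            Fin.append xl xr j ∈ Set.Ioc (0:ℝ) (1/2) := by
          intro j
          have hlle : (l.leaves : ℝ) / ((l.leaves : ℝ) + (r.leaves : ℝ)) ≤ 1 := by
            rw [div_le_one hL]; linarith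
          have hrle : (r.leaves : ℝ) / ((l.leaves : ℝ) + (r.leaves : ℝ)) ≤ 1 := by
            rw [div_le_one hL]; linarith
          induction j using Fin.addCases with
          | left i3 =>
            obtain ⟨h1, h2⟩ := hxl_mem i3
            rw [Fin.append_left]
            exact ⟨h1, by nlinarith⟩
          | right i3 =>
            obtain ⟨h1, h2⟩ := hxr_mem i3
            rw [Fin.append_right]
            exact ⟨h1, by nlinarith⟩
        exact fun i => key i
end

section
/- Let q ∈ (0,1), positive weights w_0,…,w_{n−1}, and a composition r_1+⋯+r_t = n with t ≥ 2. For any n-leaved painted binary tree T that is a refinement of the upper tree u(t; r_1,…,r_t), the weighted point M^w_q(T) satisfies x_{r_1} + x_{r_1+r_2} + ⋯ + x_{r_1+⋯+r_{t−1}} = Σ_{1 ≤ i < j ≤ t} R_i R_j, where R_i is the total weight of the i-th block of leaves; and for every n-leaved painted binary tree T, x_{r_1} + ⋯ + x_{r_1+⋯+r_{t−1}} ≤ Σ_{1 ≤ i < j ≤ t} R_i R_j, with equality iff T refines u(t; r_1,…,r_t). -/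
/-- Unpainted planar binary trees with real weights on the leaves. -/
inductive WU : Type
  | leaf : ℝ → WU
  | node : WU → WU → WU

/-- Painted binary trees with weighted leaves. -/
inductive WP : Type
  | stump : WU → WP
  | node : WP → WP → WP

/-- Leaf weights of an unpainted tree, left to right. -/
def WU.leafList : WU → List ℝ
  | .leaf w => [w]
  | .node l r => l.leafList ++ r.leafList

/-- Total weight of an unpainted tree. -/
noncomputable def WU.wsum (u : WU) : ℝ := u.leafList.sum

/-- Leaf weights of a painted tree, left to right. -/
def WP.leafList : WP → List ℝ
  | .stump u => u.leafList
  | .node l r => l.leafList ++ r.leafList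

/-- Total weight of a painted tree. -/
noncomputable def WP.wsum (t : WP) : ℝ := t.leafList.sum

/-- In-order coordinates of unpainted (type 1) nodes: `q · L_i · R_i`. -/
noncomputable def WU.coords (q : ℝ) : WU → List ℝ
  | .leaf _ => []
  | .node l r => l.coords q ++ [q * l.wsum * r.wsum] ++ r.coords q

/-- In-order coordinates `x_1, …, x_{n-1}` of the weighted point `M^w_q(T)`:
`q · L_i · R_i` at unpainted nodes and `L_i · R_i` at painted nodes. -/
noncomputable def WP.coords (q : ℝ) : WP → List ℝ
  | .stump u => u.coords q
  | .node l r => l.coords q ++ [l.wsum * r.wsum] ++ r.coords q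

/-- `pairSum [R_1, …, R_t] = Σ_{1 ≤ i < j ≤ t} R_i · R_j`. -/
noncomputable def pairSum : List ℝ → ℝ
  | [] => 0
  | w :: ws => w * ws.sum + pairSum ws

/-- The block weight sums `R_1, …, R_t`: `splitSums [r_1,…,r_t] ws` splits the
weight list `ws` into consecutive blocks of sizes `r_1, …, r_t` and records
the sum of each block. -/
noncomputable def splitSums : List ℕ → List ℝ → List ℝ
  | [], _ => []
  | r :: rs, ws => (ws.take r).sum :: splitSums rs (ws.drop r)

/-- `PGraft T Ts`: the painted tree `T` is obtained by grafting the painted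
trees in the list `Ts` (in order) onto the leaves of a fully painted binary
tree with `Ts.length` leaves. -/
inductive PGraft : WP → List WP → Prop
  | leaf (t : WP) : PGraft t [t]
  | node {l r : WP} {L R : List WP} :
      PGraft l L → PGraft r R → PGraft (WP.node l r) (L ++ R)

section ListHelpers

lemma getD_mid_lt (A B : List ℝ) (x : ℝ) (n : ℕ) (h : n < A.length) :
    (A ++ [x] ++ B).getD n 0 = A.getD n 0 := by
  rw [List.append_assoc, List.getD_append _ _ _ _ h]

lemma getD_mid_eq (A B : List ℝ) (x : ℝ) :
    (A ++ [x] ++ B).getD A.length 0 = x := by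
  rw [List.append_assoc, List.getD_append_right _ _ _ _ (le_refl _)]
  simp

lemma getD_mid_gt (A B : List ℝ) (x : ℝ) (n : ℕ) (h : A.length < n) :
    (A ++ [x] ++ B).getD n 0 = B.getD (n - A.length - 1) 0 := by
  rw [List.append_assoc, List.getD_append_right _ _ _ _ (le_of_lt h)]
  obtain ⟨j, hj⟩ : ∃ j, n - A.length = j + 1 := ⟨n - A.length - 1, by omega⟩
  rw [hj, List.singleton_append, List.getD_cons_succ]
  simp

lemma length_le_sum' (l : List ℕ) (h : ∀ x ∈ l, 1 ≤ x) : l.length ≤ l.sum := by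
  induction l with
  | nil => simp
  | cons a l ih =>
    have h1 := h a (by simp)
    have h2 := ih (fun x hx => h x (by simp [hx]))
    simp only [List.length_cons, List.sum_cons]
    omega

lemma sum_take_le (rs : List ℕ) (a b : ℕ) (hab : a ≤ b) :
    (rs.take a).sum ≤ (rs.take b).sum := by
  rw [show b = a + (b - a) by omega, List.take_add, List.sum_append]
  omega

lemma sum_take_lt (rs : List ℕ) (hr : ∀ r ∈ rs, 1 ≤ r) (a b : ℕ) (hab : a < b)
    (hb : b ≤ rs.length) : (rs.take a).sum < (rs.take b).sum := by
  rw [show b = a + (b - a) by omega, List.take_add, List.sum_append]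
  have hne : (rs.drop a).take (b - a) ≠ [] := by
    intro e
    have := congrArg List.length e
    simp only [List.length_take, List.length_drop, List.length_nil] at this
    omega
  rcases List.exists_mem_of_ne_nil _ hne with ⟨y, hy⟩
  have hy1 : 1 ≤ y := hr y (List.drop_subset _ _ (List.take_subset _ _ hy))
  have := List.single_le_sum (fun (x : ℕ) _ => Nat.zero_le x) _ hy
  omega

lemma le_sum_take (rs : List ℕ) (hr : ∀ r ∈ rs, 1 ≤ r) (k : ℕ) :
    min k rs.length ≤ (rs.take k).sum := by
  have := length_le_sum' (rs.take k) (fun x hx => hr x (List.take_subset _ _ hx))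
  simpa using this

lemma pairSum_append (A B : List ℝ) :
    pairSum (A ++ B) = pairSum A + pairSum B + A.sum * B.sum := by
  induction A with
  | nil => simp [pairSum]
  | cons a A ih =>
    simp only [List.cons_append, pairSum, List.sum_cons, List.sum_append, List.append_eq, ih]
    ring

lemma pairSum_nonneg (l : List ℝ) (h : ∀ x ∈ l, 0 ≤ x) : 0 ≤ pairSum l := by
  induction l with
  | nil => simp [pairSum]
  | cons a l ih =>
    have hs : 0 ≤ l.sum := List.sum_nonneg (fun x hx => h x (List.mem_cons_of_mem _ hx))
    have ha := h a List.mem_cons_self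
    have h2 := ih (fun x hx => h x (List.mem_cons_of_mem _ hx))
    simp only [pairSum]
    nlinarith

lemma pairSum_pos (l : List ℝ) (h : ∀ x ∈ l, 0 < x) (hl : 2 ≤ l.length) :
    0 < pairSum l := by
  match l with
  | a :: b :: t =>
    have hs : 0 < (b :: t).sum :=
      List.sum_pos _ (fun x hx => h x (List.mem_cons_of_mem _ hx)) (by simp)
    have ha : 0 < a := h a (by simp)
    have hnn : 0 ≤ pairSum (b :: t) :=
      pairSum_nonneg _ (fun x hx => le_of_lt (h x (List.mem_cons_of_mem _ hx)))
    simp only [pairSum] at hnn ⊢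
    nlinarith

lemma splitSums_length (rs : List ℕ) (ws : List ℝ) :
    (splitSums rs ws).length = rs.length := by
  induction rs generalizing ws with
  | nil => simp [splitSums]
  | cons r rs ih => simp [splitSums, ih]

lemma splitSums_sum (rs : List ℕ) (ws : List ℝ) (h : rs.sum = ws.length) :
    (splitSums rs ws).sum = ws.sum := by
  induction rs generalizing ws with
  | nil =>
    have : ws = [] := List.length_eq_zero_iff.mp (by simpa using h.symm)
    simp [this, splitSums]
  | cons r rs ih =>
    simp only [splitSums, List.sum_cons]
    rw [ih _ (by simp only [List.length_drop]; simp at h; omega)]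
    rw [← List.sum_append, List.take_append_drop]

lemma splitSums_append (rs1 rs2 : List ℕ) (ws1 ws2 : List ℝ) (h : rs1.sum = ws1.length) :
    splitSums (rs1 ++ rs2) (ws1 ++ ws2) = splitSums rs1 ws1 ++ splitSums rs2 ws2 := by
  induction rs1 generalizing ws1 with
  | nil =>
    have : ws1 = [] := List.length_eq_zero_iff.mp (by simpa using h.symm)
    simp [this, splitSums]
  | cons r rs ih =>
    have hr : r ≤ ws1.length := by simp at h; omega
    simp only [List.cons_append, splitSums, List.take_append_of_le_length hr,
      List.drop_append_of_le_length hr, List.append_eq]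
    rw [ih _ (by simp only [List.length_drop]; simp at h; omega)]

lemma splitSums_pos (rs : List ℕ) (ws : List ℝ) (hr : ∀ r ∈ rs, 1 ≤ r)
    (h : rs.sum = ws.length) (hw : ∀ w ∈ ws, 0 < w) :
    ∀ x ∈ splitSums rs ws, 0 < x := by
  induction rs generalizing ws with
  | nil => simp [splitSums]
  | cons r rs ih =>
    intro x hx
    simp only [splitSums, List.mem_cons] at hx
    have hsum : r + rs.sum = ws.length := by simpa using h
    rcases hx with rfl | hx
    · apply List.sum_pos
      · intro y hy; exact hw y (List.take_subset _ _ hy)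
      · have h1 : 1 ≤ r := hr r (by simp)
        intro e
        have := congrArg List.length e
        simp only [List.length_take, List.length_nil] at this
        omega
    · exact ih _ (fun a ha => hr a (by simp [ha]))
        (by simp only [List.length_drop]; omega)
        (fun w hw' => hw w (List.drop_subset _ _ hw')) x hx

lemma sum_range_add' (f : ℕ → ℝ) (a b : ℕ) :
    ∑ i ∈ Finset.range (a + b), f i
      = (∑ i ∈ Finset.range a, f i) + ∑ i ∈ Finset.range b, f (a + i) := by
  induction b with
  | zero => simp
  | succ b ih =>
    rw [show a + (b + 1) = (a + b) + 1 from rfl, Finset.sum_range_succ, ih,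
      Finset.sum_range_succ]
    ring

end ListHelpers

section SplitLemmas

lemma sum_split_A (A B : List ℝ) (x : ℝ) (rs : List ℕ) (k0 : ℕ)
    (hr : ∀ r ∈ rs, 1 ≤ r) (hk1 : 1 ≤ k0) (hk : k0 < rs.length)
    (hA : A.length = (rs.take k0).sum - 1) :
    ∑ i ∈ Finset.range (rs.length - 1), (A ++ [x] ++ B).getD ((rs.take (i + 1)).sum - 1) 0
      = (∑ i ∈ Finset.range (k0 - 1), A.getD (((rs.take k0).take (i + 1)).sum - 1) 0)
        + x
        + ∑ i ∈ Finset.range (rs.length - k0 - 1),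
            B.getD (((rs.drop k0).take (i + 1)).sum - 1) 0 := by
  have hnl1 : 1 ≤ (rs.take k0).sum := by
    have := le_sum_take rs hr k0; omega
  have hsplit : rs.length - 1 = (k0 - 1) + (1 + (rs.length - k0 - 1)) := by omega
  rw [hsplit, sum_range_add', sum_range_add']
  have h1 : ∑ i ∈ Finset.range (k0 - 1), (A ++ [x] ++ B).getD ((rs.take (i + 1)).sum - 1) 0
      = ∑ i ∈ Finset.range (k0 - 1), A.getD (((rs.take k0).take (i + 1)).sum - 1) 0 := by
    apply Finset.sum_congr rfl
    intro i hi
    rw [Finset.mem_range] at hi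
    have h1' : i + 1 ≤ k0 := by omega
    have heq : (rs.take k0).take (i + 1) = rs.take (i + 1) := by
      rw [List.take_take, Nat.min_eq_left h1']
    rw [heq]
    have hlt : (rs.take (i + 1)).sum < (rs.take k0).sum :=
      sum_take_lt rs hr (i + 1) k0 (by omega) (by omega)
    have hge : 1 ≤ (rs.take (i + 1)).sum := by
      have := le_sum_take rs hr (i + 1); omega
    exact getD_mid_lt _ _ _ _ (by omega)
  have h2 : ∑ i ∈ Finset.range 1,
        (A ++ [x] ++ B).getD ((rs.take (k0 - 1 + i + 1)).sum - 1) 0 = x := by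
    rw [Finset.sum_range_one]
    have : k0 - 1 + 0 + 1 = k0 := by omega
    rw [this, show (rs.take k0).sum - 1 = A.length by omega, getD_mid_eq]
  have h3 : ∑ i ∈ Finset.range (rs.length - k0 - 1),
        (A ++ [x] ++ B).getD ((rs.take (k0 - 1 + (1 + i) + 1)).sum - 1) 0
      = ∑ i ∈ Finset.range (rs.length - k0 - 1),
          B.getD (((rs.drop k0).take (i + 1)).sum - 1) 0 := by
    apply Finset.sum_congr rfl
    intro i hi
    rw [Finset.mem_range] at hi
    have hidx : k0 - 1 + (1 + i) + 1 = k0 + (i + 1) := by omega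
    rw [hidx, List.take_add, List.sum_append]
    have hlen : ((rs.drop k0).take (i + 1)).length = i + 1 := by
      rw [List.length_take, List.length_drop]; omega
    have hseg : 1 ≤ ((rs.drop k0).take (i + 1)).sum := by
      have := length_le_sum' ((rs.drop k0).take (i + 1))
        (fun y hy => hr y (List.drop_subset _ _ (List.take_subset _ _ hy)))
      omega
    rw [getD_mid_gt _ _ _ _ (by omega)]
    congr 1
    omega
  rw [h1, h2, h3]
  ring

lemma sum_split_B (A B : List ℝ) (x : ℝ) (rs : List ℕ) (k0 nl : ℕ)
    (hr : ∀ r ∈ rs, 1 ≤ r) (hk1 : 1 ≤ k0) (hk : k0 ≤ rs.length)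
    (hlt : (rs.take (k0 - 1)).sum < nl) (hgt : nl < (rs.take k0).sum)
    (hA : A.length = nl - 1) :
    ∑ i ∈ Finset.range (rs.length - 1), (A ++ [x] ++ B).getD ((rs.take (i + 1)).sum - 1) 0
      = (∑ i ∈ Finset.range
            ((rs.take (k0 - 1) ++ [nl - (rs.take (k0 - 1)).sum]).length - 1),
           A.getD (((rs.take (k0 - 1) ++ [nl - (rs.take (k0 - 1)).sum]).take (i + 1)).sum - 1) 0)
        + ∑ i ∈ Finset.range (((((rs.take k0).sum - nl) :: rs.drop k0)).length - 1),
           B.getD ((((((rs.take k0).sum - nl) :: rs.drop k0)).take (i + 1)).sum - 1) 0 := by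
  have hlen1 : (rs.take (k0 - 1)).length = k0 - 1 := by
    rw [List.length_take]; omega
  have hnl1 : 1 ≤ nl := by omega
  have hlenl : (rs.take (k0 - 1) ++ [nl - (rs.take (k0 - 1)).sum]).length = k0 := by
    rw [List.length_append, hlen1]
    simp only [List.length_singleton]
    omega
  have hlenr : ((((rs.take k0).sum - nl) :: rs.drop k0)).length = 1 + (rs.length - k0) := by
    simp only [List.length_cons, List.length_drop]
    omega
  rw [hlenl, hlenr]
  have hsplit : rs.length - 1 = (k0 - 1) + (rs.length - k0) := by omega
  have hsimp2 : 1 + (rs.length - k0) - 1 = rs.length - k0 := by omega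
  rw [hsplit, sum_range_add', hsimp2]
  have h1 : ∑ i ∈ Finset.range (k0 - 1), (A ++ [x] ++ B).getD ((rs.take (i + 1)).sum - 1) 0
      = ∑ i ∈ Finset.range (k0 - 1),
          A.getD (((rs.take (k0 - 1) ++ [nl - (rs.take (k0 - 1)).sum]).take (i + 1)).sum - 1) 0 := by
    apply Finset.sum_congr rfl
    intro i hi
    rw [Finset.mem_range] at hi
    have h1' : i + 1 ≤ k0 - 1 := by omega
    have heq : (rs.take (k0 - 1) ++ [nl - (rs.take (k0 - 1)).sum]).take (i + 1)
        = rs.take (i + 1) := by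
      rw [List.take_append_of_le_length (by rw [hlen1]; omega), List.take_take,
        Nat.min_eq_left h1']
    rw [heq]
    have hmono : (rs.take (i + 1)).sum ≤ (rs.take (k0 - 1)).sum := sum_take_le rs _ _ h1'
    have hge : 1 ≤ (rs.take (i + 1)).sum := by
      have := le_sum_take rs hr (i + 1); omega
    exact getD_mid_lt _ _ _ _ (by omega)
  have h2 : ∑ i ∈ Finset.range (rs.length - k0),
        (A ++ [x] ++ B).getD ((rs.take (k0 - 1 + i + 1)).sum - 1) 0
      = ∑ i ∈ Finset.range (rs.length - k0),
          B.getD ((((((rs.take k0).sum - nl) :: rs.drop k0)).take (i + 1)).sum - 1) 0 := by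
    apply Finset.sum_congr rfl
    intro i hi
    rw [Finset.mem_range] at hi
    have hidx : k0 - 1 + i + 1 = k0 + i := by omega
    have htk : ((((rs.take k0).sum - nl) :: rs.drop k0)).take (i + 1)
        = ((rs.take k0).sum - nl) :: (rs.drop k0).take i := by
      simp [List.take_cons]
    rw [hidx, List.take_add, List.sum_append, htk, List.sum_cons]
    rw [getD_mid_gt _ _ _ _ (by omega)]
    congr 1
    omega
  rw [h1, h2]

lemma pairSum_splitA (rs : List ℕ) (ws : List ℝ) (k0 : ℕ)
    (hsum : rs.sum = ws.length) (hk : k0 ≤ rs.length) :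
    pairSum (splitSums rs ws)
      = pairSum (splitSums (rs.take k0) (ws.take (rs.take k0).sum))
        + pairSum (splitSums (rs.drop k0) (ws.drop (rs.take k0).sum))
        + (ws.take (rs.take k0).sum).sum * (ws.drop (rs.take k0).sum).sum := by
  have hss : (rs.take k0).sum + (rs.drop k0).sum = rs.sum := by
    rw [← List.sum_append, List.take_append_drop]
  have hnl : (rs.take k0).sum ≤ ws.length := by omega
  have h1 : (rs.take k0).sum = (ws.take (rs.take k0).sum).length := by
    rw [List.length_take]; omega
  have h2 : (rs.drop k0).sum = (ws.drop (rs.take k0).sum).length := by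
    rw [List.length_drop]; omega
  conv_lhs =>
    rw [← List.take_append_drop k0 rs, ← List.take_append_drop (rs.take k0).sum ws]
  rw [splitSums_append _ _ _ _ h1, pairSum_append, splitSums_sum _ _ h1,
    splitSums_sum _ _ h2]

end SplitLemmas

section SplitB

lemma pairSum_split_lt (rs : List ℕ) (ws : List ℝ) (nl k0 : ℕ)
    (hr : ∀ r ∈ rs, 1 ≤ r) (hw : ∀ w ∈ ws, 0 < w) (hsum : rs.sum = ws.length)
    (hk1 : 1 ≤ k0) (hk : k0 ≤ rs.length) (ht : 2 ≤ rs.length)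
    (hlt : (rs.take (k0 - 1)).sum < nl) (hgt : nl < (rs.take k0).sum) :
    pairSum (splitSums (rs.take (k0 - 1) ++ [nl - (rs.take (k0 - 1)).sum]) (ws.take nl))
      + pairSum (splitSums (((rs.take k0).sum - nl) :: rs.drop k0) (ws.drop nl))
      < pairSum (splitSums rs ws) := by
  have hk0lt : k0 - 1 < rs.length := by omega
  have hsB : (rs.take k0).sum ≤ rs.sum := by
    have := sum_take_le rs k0 rs.length (by omega)
    rwa [List.take_length] at this
  have hnlw : nl ≤ ws.length := by omega
  have hsXw : (rs.take (k0 - 1)).sum ≤ ws.length := by omega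
  -- abbreviations
  set sX := (rs.take (k0 - 1)).sum with hsX
  set sB := (rs.take k0).sum with hsBdef
  set C := splitSums (rs.take (k0 - 1)) (ws.take sX) with hC
  set a := ((ws.drop sX).take (nl - sX)).sum with ha
  set b := ((ws.drop nl).take (sB - nl)).sum with hb
  set D := splitSums (rs.drop k0) (ws.drop sB) with hD
  -- Step 1 : left term
  have hstep1 : splitSums (rs.take (k0 - 1) ++ [nl - sX]) (ws.take nl) = C ++ [a] := by
    have hts : (ws.take nl).take sX = ws.take sX := by
      rw [List.take_take, Nat.min_eq_left (by omega)]
    have hlen' : (rs.take (k0 - 1)).sum = ((ws.take nl).take sX).length := by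
      rw [hts, List.length_take]; omega
    conv_lhs => rw [← List.take_append_drop sX (ws.take nl)]
    rw [splitSums_append _ _ _ _ hlen', hts]
    congr 1
    have hdt : (ws.take nl).drop sX = (ws.drop sX).take (nl - sX) := by
      rw [List.drop_take]
    have hlen2 : ((ws.take nl).drop sX).length = nl - sX := by
      rw [List.length_drop, List.length_take]; omega
    simp only [splitSums]
    rw [List.take_of_length_le (by rw [hlen2]), hdt]
  -- Step 2 : right term
  have hstep2 : splitSums ((sB - nl) :: rs.drop k0) (ws.drop nl) = b :: D := by
    have hdd : (ws.drop nl).drop (sB - nl) = ws.drop sB := by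
      rw [List.drop_drop]
      congr 1
      omega
    simp only [splitSums, hdd]
    rfl
  -- Step 3 : whole term
  have hgelem : rs.take k0 = rs.take (k0 - 1) ++ [rs[k0 - 1]'hk0lt] := by
    conv_lhs => rw [show k0 = (k0 - 1) + 1 by omega]
    rw [List.take_succ]
    simp [List.getElem?_eq_getElem hk0lt]
  have hgsum : sB = sX + rs[k0 - 1]'hk0lt := by
    rw [hsBdef, hgelem, List.sum_append, List.sum_singleton]
  have hdropg : rs.drop (k0 - 1) = rs[k0 - 1]'hk0lt :: rs.drop k0 := by
    have h11 : k0 - 1 + 1 = k0 := by omega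
    rw [List.drop_eq_getElem_cons hk0lt, h11]
  have hstep3 : splitSums rs ws = C ++ ((a + b) :: D) := by
    have hlen3 : (rs.take (k0 - 1)).sum = (ws.take sX).length := by
      rw [List.length_take]; omega
    conv_lhs =>
      rw [← List.take_append_drop (k0 - 1) rs, hdropg,
        ← List.take_append_drop sX ws]
    rw [splitSums_append _ _ _ _ hlen3]
    congr 1
    simp only [splitSums]
    congr 1
    · -- head : ((ws.drop sX).take g).sum = a + b
      have hgg : rs[k0 - 1]'hk0lt = (nl - sX) + (sB - nl) := by omega
      have hdd2 : (ws.drop sX).drop (nl - sX) = ws.drop nl := by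
        rw [List.drop_drop]
        congr 1
        omega
      rw [hgg, List.take_add, List.sum_append, hdd2]
    · -- tail
      have hdd3 : (ws.drop sX).drop (rs[k0 - 1]'hk0lt) = ws.drop sB := by
        rw [List.drop_drop]
        congr 1
        omega
      rw [hdd3]
  rw [hstep1, hstep2, hstep3, pairSum_append, pairSum_append]
  simp only [pairSum, List.sum_cons, List.sum_singleton, List.sum_nil]
  -- numeric part
  have hCpos : ∀ x ∈ C, 0 < x := by
    rw [hC]
    exact splitSums_pos _ _ (fun y hy => hr y (List.take_subset _ _ hy))
      (by rw [List.length_take]; omega) (fun w hw' => hw w (List.take_subset _ _ hw'))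
  have hDpos : ∀ x ∈ D, 0 < x := by
    rw [hD]
    apply splitSums_pos _ _ (fun y hy => hr y (List.drop_subset _ _ hy))
    · rw [List.length_drop]
      have : sB + (rs.drop k0).sum = rs.sum := by
        rw [hsBdef, ← List.sum_append, List.take_append_drop]
      omega
    · exact fun w hw' => hw w (List.drop_subset _ _ hw')
  have hCs : 0 ≤ C.sum := List.sum_nonneg (fun x hx => le_of_lt (hCpos x hx))
  have hDs : 0 ≤ D.sum := List.sum_nonneg (fun x hx => le_of_lt (hDpos x hx))
  have hapos : 0 < a := by
    rw [ha]
    apply List.sum_pos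
    · exact fun y hy => hw y (List.drop_subset _ _ (List.take_subset _ _ hy))
    · intro e
      have := congrArg List.length e
      simp only [List.length_take, List.length_drop, List.length_nil] at this
      omega
  have hbpos : 0 < b := by
    rw [hb]
    apply List.sum_pos
    · exact fun y hy => hw y (List.drop_subset _ _ (List.take_subset _ _ hy))
    · intro e
      have := congrArg List.length e
      simp only [List.length_take, List.length_drop, List.length_nil] at this
      omega
  have hkey : 0 < C.sum * b + a * D.sum := by
    by_cases hCne : 2 ≤ k0
    · have : C ≠ [] := by
        rw [hC]
        intro e
        have := congrArg List.length e
        rw [splitSums_length] at this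
        simp only [List.length_take, List.length_nil] at this
        omega
      have : 0 < C.sum := List.sum_pos _ hCpos this
      nlinarith
    · have hk0eq : k0 = 1 := by omega
      have : D ≠ [] := by
        rw [hD]
        intro e
        have := congrArg List.length e
        rw [splitSums_length] at this
        simp only [List.length_drop, List.length_nil] at this
        omega
      have : 0 < D.sum := List.sum_pos _ hDpos this
      nlinarith
  nlinarith
end SplitB

section TreeHelpers

lemma WU.leafList_ne_nil (u : WU) : u.leafList ≠ [] := by
  induction u with
  | leaf w => simp [WU.leafList]
  | node l r ihl ihr => simp [WU.leafList, List.append_eq_nil_iff, ihl]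

lemma WP.leafList_ne_nil (t : WP) : t.leafList ≠ [] := by
  induction t with
  | stump u => simpa [WP.leafList] using u.leafList_ne_nil
  | node l r ihl ihr => simp [WP.leafList, List.append_eq_nil_iff, ihl]

lemma WU.coords_length (q : ℝ) (u : WU) :
    (u.coords q).length = u.leafList.length - 1 := by
  induction u with
  | leaf w => simp [WU.coords, WU.leafList]
  | node l r ihl ihr =>
    have h1 := List.length_pos_iff.mpr l.leafList_ne_nil
    have h2 := List.length_pos_iff.mpr r.leafList_ne_nil
    simp only [WU.coords, WU.leafList, List.length_append, List.length_singleton, ihl, ihr]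
    omega

lemma WP.coords_length (q : ℝ) (t : WP) :
    (t.coords q).length = t.leafList.length - 1 := by
  induction t with
  | stump u => simpa [WP.coords, WP.leafList] using WU.coords_length q u
  | node l r ihl ihr =>
    have h1 := List.length_pos_iff.mpr l.leafList_ne_nil
    have h2 := List.length_pos_iff.mpr r.leafList_ne_nil
    simp only [WP.coords, WP.leafList, List.length_append, List.length_singleton, ihl, ihr]
    omega

lemma PGraft.ne_nil {T : WP} {Ts : List WP} (h : PGraft T Ts) : Ts ≠ [] := by
  induction h with
  | leaf t => simp
  | node h1 h2 ih1 ih2 =>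
    intro e
    rcases List.append_eq_nil_iff.mp e with ⟨e1, _⟩
    exact ih1 e1

lemma PGraft.lengths_sum {T : WP} {Ts : List WP} (h : PGraft T Ts) :
    (Ts.map (fun u => u.leafList.length)).sum = T.leafList.length := by
  induction h with
  | leaf t => simp
  | node h1 h2 ih1 ih2 =>
    simp only [List.map_append, List.sum_append, ih1, ih2, WP.leafList, List.length_append]

lemma main_small (q : ℝ) (T : WP) (rs : List ℕ) (hsum : rs.sum = T.leafList.length)
    (ht1 : rs.length ≤ 1) :
    (∑ i ∈ Finset.range (rs.length - 1),
        ((T.coords q).getD ((rs.take (i + 1)).sum - 1) 0))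
        = pairSum (splitSums rs T.leafList)
    ∧ (∃ Ts : List WP, PGraft T Ts ∧ Ts.map (fun u => u.leafList.length) = rs) := by
  have hpos : 1 ≤ T.leafList.length := List.length_pos_iff.mpr T.leafList_ne_nil
  have hne : rs ≠ [] := by
    intro e
    rw [e] at hsum
    simp at hsum
    omega
  obtain ⟨r0, rs0, rfl⟩ := List.exists_cons_of_ne_nil hne
  have h0 : rs0 = [] := List.length_eq_zero_iff.mp (by simp only [List.length_cons] at ht1; omega)
  subst h0
  have hr0 : r0 = T.leafList.length := by simpa using hsum
  constructor
  · simp [splitSums, pairSum]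
  · exact ⟨[T], PGraft.leaf T, by simp [hr0]⟩

end TreeHelpers

section MainLemmas

lemma WU.bound (q : ℝ) (hq0 : 0 ≤ q) :
    ∀ (u : WU) (rs : List ℕ), (∀ w ∈ u.leafList, 0 < w) → (∀ r ∈ rs, 1 ≤ r) →
      rs.sum = u.leafList.length →
      (∑ i ∈ Finset.range (rs.length - 1),
          ((u.coords q).getD ((rs.take (i + 1)).sum - 1) 0))
        ≤ q * pairSum (splitSums rs u.leafList) := by
  intro u
  induction u with
  | leaf w =>
    intro rs hw hr hsum
    have hlen : rs.length ≤ 1 := by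
      have := length_le_sum' rs hr
      simp [WU.leafList] at hsum
      omega
    rw [show rs.length - 1 = 0 by omega]
    simp only [Finset.range_zero, Finset.sum_empty]
    exact mul_nonneg hq0 (pairSum_nonneg _ fun x hx =>
      le_of_lt (splitSums_pos rs _ hr hsum hw x hx))
  | node l r ihl ihr =>
    intro rs hw hr hsum
    simp only [WU.coords, WU.leafList] at hw hsum ⊢
    by_cases ht1 : rs.length ≤ 1
    · rw [show rs.length - 1 = 0 by omega]
      simp only [Finset.range_zero, Finset.sum_empty]
      exact mul_nonneg hq0 (pairSum_nonneg _ fun x hx =>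
        le_of_lt (splitSums_pos rs _ hr (by simpa using hsum)
          (by simpa using hw) x hx))
    · push_neg at ht1
      have hwl : ∀ w ∈ l.leafList, 0 < w := fun w h => hw w (List.mem_append_left _ h)
      have hwr : ∀ w ∈ r.leafList, 0 < w := fun w h => hw w (List.mem_append_right _ h)
      have hnl1 : 1 ≤ l.leafList.length := List.length_pos_iff.mpr l.leafList_ne_nil
      have hnr1 : 1 ≤ r.leafList.length := List.length_pos_iff.mpr r.leafList_ne_nil
      have hsum' : rs.sum = l.leafList.length + r.leafList.length := by
        simpa using hsum
      have hex : ∃ k, l.leafList.length ≤ (rs.take k).sum :=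
        ⟨rs.length, by rw [List.take_length]; omega⟩
      have hk0 : l.leafList.length ≤ (rs.take (Nat.find hex)).sum := Nat.find_spec hex
      have hk0le : Nat.find hex ≤ rs.length :=
        Nat.find_le (by rw [List.take_length]; omega)
      have hmin : ∀ m, m < Nat.find hex → (rs.take m).sum < l.leafList.length := by
        intro m hm
        have := Nat.find_min hex hm
        omega
      have hk0pos : 1 ≤ Nat.find hex := by
        by_contra h
        have h0 : Nat.find hex = 0 := by omega
        have := hk0
        rw [h0] at this
        simp only [List.take_zero, List.sum_nil] at this
        omega
      have hcl := WU.coords_length q l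
      have hsplits : (rs.take (Nat.find hex)).sum + (rs.drop (Nat.find hex)).sum = rs.sum := by
        rw [← List.sum_append, List.take_append_drop]
      by_cases hcA : (rs.take (Nat.find hex)).sum = l.leafList.length
      · -- Case A
        have hk0lt : Nat.find hex < rs.length := by
          by_contra h
          have he : Nat.find hex = rs.length := by omega
          rw [he, List.take_length] at hcA
          omega
        rw [sum_split_A (l.coords q) (r.coords q) _ rs (Nat.find hex) hr hk0pos hk0lt
          (by omega)]
        rw [pairSum_splitA rs (l.leafList ++ r.leafList) (Nat.find hex)
          (by rw [List.length_append]; omega) hk0le, hcA, List.take_left, List.drop_left]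
        have h1 := ihl (rs.take (Nat.find hex)) hwl
          (fun x hx => hr x (List.take_subset _ _ hx)) (by rw [hcA])
        have h2 := ihr (rs.drop (Nat.find hex)) hwr
          (fun x hx => hr x (List.drop_subset _ _ hx)) (by omega)
        rw [show (rs.take (Nat.find hex)).length = Nat.find hex by
          rw [List.length_take]; omega] at h1
        rw [List.length_drop] at h2
        have hx : q * l.wsum * r.wsum = q * (l.leafList.sum * r.leafList.sum) := by
          rw [WU.wsum, WU.wsum]; ring
        rw [hx]
        linarith [h1, h2]
      · -- Case B
        have hcB : l.leafList.length < (rs.take (Nat.find hex)).sum := by omega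
        have hltB : (rs.take (Nat.find hex - 1)).sum < l.leafList.length :=
          hmin _ (by omega)
        rw [sum_split_B (l.coords q) (r.coords q) _ rs (Nat.find hex) l.leafList.length
          hr hk0pos hk0le hltB hcB (by omega)]
        have h1 := ihl (rs.take (Nat.find hex - 1)
              ++ [l.leafList.length - (rs.take (Nat.find hex - 1)).sum]) hwl
          (by
            intro x hx
            rcases List.mem_append.mp hx with hx' | hx'
            · exact hr x (List.take_subset _ _ hx')
            · simp at hx'
              omega)
          (by rw [List.sum_append, List.sum_singleton]; omega)
        have h2 := ihr (((rs.take (Nat.find hex)).sum - l.leafList.length)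
              :: rs.drop (Nat.find hex)) hwr
          (by
            intro x hx
            rcases List.mem_cons.mp hx with hx' | hx'
            · omega
            · exact hr x (List.drop_subset _ _ hx'))
          (by rw [List.sum_cons]; omega)
        have hP := pairSum_split_lt rs (l.leafList ++ r.leafList) l.leafList.length
          (Nat.find hex) hr (by simpa using hw) (by rw [List.length_append]; omega)
          hk0pos hk0le (by omega) hltB hcB
        rw [List.take_left, List.drop_left] at hP
        nlinarith [h1, h2, hP, mul_le_mul_of_nonneg_left (le_of_lt hP) hq0]

end MainLemmas

lemma WP.main (q : ℝ) (hq0 : 0 < q) (hq1 : q < 1) :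
    ∀ (T : WP) (rs : List ℕ), (∀ w ∈ T.leafList, 0 < w) → (∀ r ∈ rs, 1 ≤ r) →
      rs.sum = T.leafList.length →
      ((∑ i ∈ Finset.range (rs.length - 1),
          ((T.coords q).getD ((rs.take (i + 1)).sum - 1) 0))
          ≤ pairSum (splitSums rs T.leafList) ∧
        ((∑ i ∈ Finset.range (rs.length - 1),
            ((T.coords q).getD ((rs.take (i + 1)).sum - 1) 0))
            = pairSum (splitSums rs T.leafList) ↔
          ∃ Ts : List WP, PGraft T Ts ∧ Ts.map (fun u => u.leafList.length) = rs)) := by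
  intro T
  induction T with
  | stump u =>
    intro rs hw hr hsum
    by_cases ht1 : rs.length ≤ 1
    · obtain ⟨heq, hex⟩ := main_small q (WP.stump u) rs hsum ht1
      exact ⟨le_of_eq heq, fun _ => hex, fun _ => heq⟩
    · push_neg at ht1
      simp only [WP.coords, WP.leafList] at hw hsum ⊢
      have hb := WU.bound q (le_of_lt hq0) u rs hw hr hsum
      have hPpos : 0 < pairSum (splitSums rs u.leafList) := by
        apply pairSum_pos _ (splitSums_pos rs _ hr hsum hw)
        rw [splitSums_length]
        omega
      have hqP : q * pairSum (splitSums rs u.leafList)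
          < pairSum (splitSums rs u.leafList) := by
        have := mul_lt_mul_of_pos_right hq1 hPpos
        linarith
      have hlt := lt_of_le_of_lt hb hqP
      refine ⟨le_of_lt hlt, fun heq => absurd heq (ne_of_lt hlt), ?_⟩
      rintro ⟨Ts, hg, hlen⟩
      exfalso
      cases hg with
      | leaf t =>
        rw [← hlen] at ht1
        simp at ht1
  | node l r ihl ihr =>
    intro rs hw hr hsum
    by_cases ht1 : rs.length ≤ 1
    · obtain ⟨heq, hex⟩ := main_small q (WP.node l r) rs hsum ht1
      exact ⟨le_of_eq heq, fun _ => hex, fun _ => heq⟩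
    · push_neg at ht1
      simp only [WP.coords, WP.leafList] at hw hsum ⊢
      have hwl : ∀ w ∈ l.leafList, 0 < w := fun w h => hw w (List.mem_append_left _ h)
      have hwr : ∀ w ∈ r.leafList, 0 < w := fun w h => hw w (List.mem_append_right _ h)
      have hnl1 : 1 ≤ l.leafList.length := List.length_pos_iff.mpr l.leafList_ne_nil
      have hnr1 : 1 ≤ r.leafList.length := List.length_pos_iff.mpr r.leafList_ne_nil
      have hsum' : rs.sum = l.leafList.length + r.leafList.length := by simpa using hsum
      have hex : ∃ k, l.leafList.length ≤ (rs.take k).sum :=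
        ⟨rs.length, by rw [List.take_length]; omega⟩
      have hk0 : l.leafList.length ≤ (rs.take (Nat.find hex)).sum := Nat.find_spec hex
      have hk0le : Nat.find hex ≤ rs.length :=
        Nat.find_le (by rw [List.take_length]; omega)
      have hmin : ∀ m, m < Nat.find hex → (rs.take m).sum < l.leafList.length := by
        intro m hm
        have := Nat.find_min hex hm
        omega
      have hk0pos : 1 ≤ Nat.find hex := by
        by_contra h
        have h0 : Nat.find hex = 0 := by omega
        have := hk0
        rw [h0] at this
        simp only [List.take_zero, List.sum_nil] at this
        omega
      have hcl := WP.coords_length q l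
      have hsplits : (rs.take (Nat.find hex)).sum + (rs.drop (Nat.find hex)).sum
          = rs.sum := by
        rw [← List.sum_append, List.take_append_drop]
      by_cases hcA : (rs.take (Nat.find hex)).sum = l.leafList.length
      · -- Case A
        have hk0lt : Nat.find hex < rs.length := by
          by_contra h
          have he : Nat.find hex = rs.length := by omega
          rw [he, List.take_length] at hcA
          omega
        rw [sum_split_A (l.coords q) (r.coords q) _ rs (Nat.find hex) hr hk0pos hk0lt
          (by omega)]
        rw [pairSum_splitA rs (l.leafList ++ r.leafList) (Nat.find hex)
          (by rw [List.length_append]; omega) hk0le, hcA, List.take_left, List.drop_left]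
        obtain ⟨hle1, hiff1⟩ := ihl (rs.take (Nat.find hex)) hwl
          (fun x hx => hr x (List.take_subset _ _ hx)) (by rw [hcA])
        obtain ⟨hle2, hiff2⟩ := ihr (rs.drop (Nat.find hex)) hwr
          (fun x hx => hr x (List.drop_subset _ _ hx)) (by omega)
        rw [show (rs.take (Nat.find hex)).length = Nat.find hex by
          rw [List.length_take]; omega] at hle1 hiff1
        rw [List.length_drop] at hle2 hiff2
        have hx : l.wsum * r.wsum = l.leafList.sum * r.leafList.sum := rfl
        rw [hx]
        refine ⟨by linarith, ?_, ?_⟩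
        · intro heq
          obtain ⟨Ls, hgl, hLs⟩ := hiff1.mp (by linarith)
          obtain ⟨Rs, hgr, hRs⟩ := hiff2.mp (by linarith)
          exact ⟨Ls ++ Rs, PGraft.node hgl hgr,
            by rw [List.map_append, hLs, hRs, List.take_append_drop]⟩
        · rintro ⟨Ts, hg, hlen⟩
          cases hg with
          | leaf t =>
            rw [← hlen] at ht1
            simp at ht1
          | @node _ _ Ls Rs hgl hgr =>
            have hmap : (Ls.map fun u => u.leafList.length)
                ++ (Rs.map fun u => u.leafList.length) = rs := by
              rw [← List.map_append]
              exact hlen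
            have hXsum : (Ls.map fun u => u.leafList.length).sum = l.leafList.length :=
              hgl.lengths_sum
            have htk : rs.take (Ls.map fun u => u.leafList.length).length
                = Ls.map fun u => u.leafList.length := by
              rw [← hmap, List.take_left]
            have hssk : (rs.take (Ls.map fun u => u.leafList.length).length).sum
                = l.leafList.length := by rw [htk, hXsum]
            have hkle : (Ls.map fun u => u.leafList.length).length ≤ rs.length := by
              rw [← hmap]
              simp
            have hkk0 : (Ls.map fun u => u.leafList.length).length = Nat.find hex := by
              by_contra hne'
              rcases Nat.lt_or_ge (Ls.map fun u => u.leafList.length).length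
                  (Nat.find hex) with hlt' | hge'
              · have := sum_take_lt rs hr _ _ hlt' hk0le
                omega
              · have hgt' : Nat.find hex < (Ls.map fun u => u.leafList.length).length :=
                  by omega
                have := sum_take_lt rs hr _ _ hgt' hkle
                omega
            have hXeq : (Ls.map fun u => u.leafList.length)
                = rs.take (Nat.find hex) := by
              rw [← hkk0, htk]
            have hYeq : (Rs.map fun u => u.leafList.length)
                = rs.drop (Nat.find hex) := by
              rw [← hkk0]
              conv_rhs => rw [← hmap]
              exact (List.drop_left).symm
            have e1 := hiff1.mpr ⟨Ls, hgl, hXeq⟩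
            have e2 := hiff2.mpr ⟨Rs, hgr, hYeq⟩
            linarith
      · -- Case B
        have hcB : l.leafList.length < (rs.take (Nat.find hex)).sum := by omega
        have hltB : (rs.take (Nat.find hex - 1)).sum < l.leafList.length :=
          hmin _ (by omega)
        rw [sum_split_B (l.coords q) (r.coords q) _ rs (Nat.find hex) l.leafList.length
          hr hk0pos hk0le hltB hcB (by omega)]
        have h1 := (ihl (rs.take (Nat.find hex - 1)
              ++ [l.leafList.length - (rs.take (Nat.find hex - 1)).sum]) hwl
          (by
            intro x hx
            rcases List.mem_append.mp hx with hx' | hx'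
            · exact hr x (List.take_subset _ _ hx')
            · simp at hx'
              omega)
          (by rw [List.sum_append, List.sum_singleton]; omega)).1
        have h2 := (ihr (((rs.take (Nat.find hex)).sum - l.leafList.length)
              :: rs.drop (Nat.find hex)) hwr
          (by
            intro x hx
            rcases List.mem_cons.mp hx with hx' | hx'
            · omega
            · exact hr x (List.drop_subset _ _ hx'))
          (by rw [List.sum_cons]; omega)).1
        have hP := pairSum_split_lt rs (l.leafList ++ r.leafList) l.leafList.length
          (Nat.find hex) hr (by simpa using hw) (by rw [List.length_append]; omega)
          hk0pos hk0le (by omega) hltB hcB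
        rw [List.take_left, List.drop_left] at hP
        have hlt : (∑ i ∈ Finset.range
              ((rs.take (Nat.find hex - 1)
                ++ [l.leafList.length - (rs.take (Nat.find hex - 1)).sum]).length - 1),
              (l.coords q).getD
                (((rs.take (Nat.find hex - 1)
                  ++ [l.leafList.length - (rs.take (Nat.find hex - 1)).sum]).take
                    (i + 1)).sum - 1) 0)
            + ∑ i ∈ Finset.range
                (((((rs.take (Nat.find hex)).sum - l.leafList.length)
                  :: rs.drop (Nat.find hex))).length - 1),
              (r.coords q).getD
                ((((((rs.take (Nat.find hex)).sum - l.leafList.length)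
                  :: rs.drop (Nat.find hex))).take (i + 1)).sum - 1) 0
            < pairSum (splitSums rs (l.leafList ++ r.leafList)) := by
          linarith
        refine ⟨le_of_lt hlt, fun heq => absurd heq (ne_of_lt hlt), ?_⟩
        rintro ⟨Ts, hg, hlen⟩
        exfalso
        cases hg with
        | leaf t =>
          rw [← hlen] at ht1
          simp at ht1
        | @node _ _ Ls Rs hgl hgr =>
          have hmap : (Ls.map fun u => u.leafList.length)
              ++ (Rs.map fun u => u.leafList.length) = rs := by
            rw [← List.map_append]
            exact hlen
          have hXsum : (Ls.map fun u => u.leafList.length).sum = l.leafList.length :=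
            hgl.lengths_sum
          have htk : rs.take (Ls.map fun u => u.leafList.length).length
              = Ls.map fun u => u.leafList.length := by
            rw [← hmap, List.take_left]
          have hssk : (rs.take (Ls.map fun u => u.leafList.length).length).sum
              = l.leafList.length := by rw [htk, hXsum]
          rcases Nat.lt_or_ge (Ls.map fun u => u.leafList.length).length
              (Nat.find hex) with hlt' | hge'
          · have := hmin _ hlt'
            omega
          · have := sum_take_le rs (Nat.find hex)
              (Ls.map fun u => u.leafList.length).length hge'
            omega


/-- Upper-facet hyperplane lemma: for `q ∈ (0,1)`, positive weights, and a
composition `r_1 + ⋯ + r_t = n` with `t ≥ 2`, every `n`-leaved painted binary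
tree `T` satisfies
`x_{r_1} + x_{r_1+r_2} + ⋯ + x_{r_1+⋯+r_{t-1}} ≤ Σ_{1 ≤ i < j ≤ t} R_i R_j`,
with equality iff `T` refines the upper tree `u(t; r_1, …, r_t)`, i.e. iff
`T` is obtained by grafting painted trees with `r_1, …, r_t` leaves onto a
fully painted binary tree. -/
theorem upper_facet_hyperplane (q : ℝ) (hq : q ∈ Set.Ioo (0 : ℝ) 1)
    (T : WP) (n : ℕ) (rs : List ℕ) (hn : T.leafList.length = n)
    (hw : ∀ w ∈ T.leafList, 0 < w)
    (hr : ∀ r ∈ rs, 1 ≤ r) (hsum : rs.sum = n) (ht : 2 ≤ rs.length) :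
    (∑ i ∈ Finset.range (rs.length - 1),
        ((T.coords q).getD ((rs.take (i + 1)).sum - 1) 0)) ≤
        pairSum (splitSums rs T.leafList) ∧
      ((∑ i ∈ Finset.range (rs.length - 1),
          ((T.coords q).getD ((rs.take (i + 1)).sum - 1) 0)) =
          pairSum (splitSums rs T.leafList) ↔
        ∃ Ts : List WP, PGraft T Ts ∧
          Ts.map (fun u => u.leafList.length) = rs) := by
  obtain ⟨hq0, hq1⟩ := hq
  exact WP.main q hq0 hq1 T rs hw hr (by rw [hn]; exact hsum)
end
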